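/- arXiv:2007.13082 — 4 statements merged into one kernel-verified Lean document; each statement's English description precedes it below -/
import Mathlib

section
/- Let H be a connected simple graph. All nonempty pure skeletons Δ^[i] of the clique complex Δ = Δ(L(H)) with i ≥ 3 are Cohen–Macaulay if and only if H has at most one vertex of degree ≥ 4. -/
open Finset SimpleGraph

variable {V : Type*} [DecidableEq V]

/-- An abstract simplicial complex: contains the empty face and is downward closed. -/
def IsComplex (K : Set (Finset V)) : Prop :=
  (∅ : Finset V) ∈ K ∧ ∀ F ∈ K, ∀ G ⊆ F, G ∈ K

/-- `F` is a facet (maximal face) of `K`. -/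
def IsFacet (K : Set (Finset V)) (F : Finset V) : Prop :=
  F ∈ K ∧ ∀ G ∈ K, F ⊆ G → F = G

/-- `K` is pure: all facets have the same cardinality. -/
def IsPure (K : Set (Finset V)) : Prop :=
  ∀ F G, IsFacet K F → IsFacet K G → F.card = G.card

/-- Deletion `K - v`. -/
def del (K : Set (Finset V)) (v : V) : Set (Finset V) := {F ∈ K | v ∉ F}

/-- The link of a vertex. -/
def link (K : Set (Finset V)) (v : V) : Set (Finset V) :=
  {F | v ∉ F ∧ insert v F ∈ K}

/-- A shedding vertex: a vertex such that no face of the link is a facet of the deletion. -/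
def IsSheddingVertex (K : Set (Finset V)) (v : V) : Prop :=
  ({v} : Finset V) ∈ K ∧ ∀ F ∈ link K v, ¬ IsFacet (del K v) F

/-- `K` is a (possibly empty-face-only) simplex: the power set of some finset. -/
def IsSimplexComplex (K : Set (Finset V)) : Prop :=
  ∃ F : Finset V, K = {G | G ⊆ F}

/-- Vertex decomposability. -/
inductive VertexDecomposable : Set (Finset V) → Prop
  | simplex (K : Set (Finset V)) : IsSimplexComplex K → VertexDecomposable K
  | shed (K : Set (Finset V)) (v : V) : IsSheddingVertex K v →
      VertexDecomposable (link K v) → VertexDecomposable (del K v) →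
      VertexDecomposable K

/-- The complex generated by a family of finsets. -/
def gen (S : Set (Finset V)) : Set (Finset V) := {G | ∃ F ∈ S, G ⊆ F}

/-- A shelling order of the facets of `K`. -/
def IsShelling (K : Set (Finset V)) (l : List (Finset V)) : Prop :=
  l.Nodup ∧ (∀ F, IsFacet K F ↔ F ∈ l) ∧
  ∀ i : ℕ, (h : i + 1 < l.length) →
    (∃ F, IsFacet (gen {F | F ∈ l.take (i+1)} ∩ gen {l.get ⟨i+1, h⟩}) F) ∧
    ∀ F, IsFacet (gen {F | F ∈ l.take (i+1)} ∩ gen {l.get ⟨i+1, h⟩}) F →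
      F.card + 1 = (l.get ⟨i+1, h⟩).card

def Shellable (K : Set (Finset V)) : Prop := ∃ l, IsShelling K l

/-- Two facets are adjacent (intersect in codimension one). -/
def FacetAdj (K : Set (Finset V)) (F G : Finset V) : Prop :=
  IsFacet K F ∧ IsFacet K G ∧ (F ∩ G).card + 1 = F.card ∧ (F ∩ G).card + 1 = G.card

/-- A pure complex is strongly connected (connected in codimension 1). -/
def StronglyConnected (K : Set (Finset V)) : Prop :=
  IsPure K ∧ ∀ F G, IsFacet K F → IsFacet K G → Relation.ReflTransGen (FacetAdj K) F G

/-- The clique complex of a graph. -/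
def cliqueComplex (G : SimpleGraph V) : Set (Finset V) := {F | G.IsClique (F : Set V)}

/-- The pure `i`-skeleton of `K`: generated by the faces of dimension `i`. -/
def pureSkeleton (K : Set (Finset V)) (i : ℕ) : Set (Finset V) :=
  {G | ∃ F ∈ K, F.card = i + 1 ∧ G ⊆ F}

/-- The link of a face. -/
def linkFace (K : Set (Finset V)) (F : Finset V) : Set (Finset V) :=
  {G | Disjoint F G ∧ F ∪ G ∈ K}

section Homology
variable (k : Type*) [Field k]

/-- Boundary of a single face, w.r.t. a linear order `lo` on the vertices. -/
noncomputable def bdFace (lo : LinearOrder V) (F : Finset V) : Finset V →₀ k :=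
  letI := lo
  ∑ v ∈ F, ((-1 : k) ^ ((F.filter (fun w => w < v)).card)) • Finsupp.single (F.erase v) (1 : k)

/-- The boundary operator of the augmented oriented chain complex, w.r.t. `lo`. -/
noncomputable def bd (lo : LinearOrder V) (c : Finset V →₀ k) : Finset V →₀ k :=
  c.sum fun F a => a • bdFace k lo F

/-- The reduced homology of `K` in the degree of faces of cardinality `j`
(i.e. dimension `j - 1`) vanishes over `k`. -/
def HomologyVanishes (K : Set (Finset V)) (j : ℕ) : Prop :=
  ∀ lo : LinearOrder V, ∀ c : Finset V →₀ k,
    (∀ F ∈ c.support, F ∈ K ∧ F.card = j) → bd k lo c = 0 →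
      ∃ d : Finset V →₀ k, (∀ F ∈ d.support, F ∈ K ∧ F.card = j + 1) ∧ bd k lo d = c

/-- Reisner's criterion: `K` is Cohen–Macaulay over the field `k`. -/
def IsCMover (K : Set (Finset V)) : Prop :=
  ∀ F ∈ K, ∀ j : ℕ, (∃ G ∈ linkFace K F, j < G.card) →
    HomologyVanishes k (linkFace K F) j

/-- `K` is sequentially Cohen–Macaulay over `k`. -/
def IsSeqCMover (K : Set (Finset V)) : Prop :=
  ∀ i : ℕ, IsCMover k (pureSkeleton K i)

/-- The core of a complex. -/
def core (K : Set (Finset V)) : Set (Finset V) :=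
  {F ∈ K | ∀ v ∈ F, ∃ G, IsFacet K G ∧ v ∉ G}

/-- The top reduced homology of `K` is one-dimensional (`≅ k`), where the top
cardinality of a face of `K` is `m`. -/
def TopHomologyIsK (K : Set (Finset V)) (m : ℕ) : Prop :=
  (∃ G ∈ K, G.card = m) ∧ (∀ G ∈ K, G.card ≤ m) ∧
  ∀ lo : LinearOrder V, ∃ c : Finset V →₀ k, c ≠ 0 ∧
    (∀ F ∈ c.support, F ∈ K ∧ F.card = m) ∧ bd k lo c = 0 ∧
    ∀ c' : Finset V →₀ k, (∀ F ∈ c'.support, F ∈ K ∧ F.card = m) → bd k lo c' = 0 →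
      ∃ a : k, c' = a • c

/-- Stanley's criterion: `K` is Gorenstein over `k`. -/
def IsGorensteinOver (K : Set (Finset V)) : Prop :=
  ∀ F ∈ core K, ∃ m : ℕ,
    TopHomologyIsK k (linkFace (core K) F) m ∧
    ∀ j : ℕ, j < m → HomologyVanishes k (linkFace (core K) F) j

end Homology


namespace Stmt14Aux

section Generic
variable {V : Type*} [DecidableEq V] (k : Type*) [Field k]

/-- The cone over `u` of a chain. -/
noncomputable def cone (u : V) (c : Finset V →₀ k) : Finset V →₀ k :=
  c.sum fun F a => if u ∈ F then 0 else Finsupp.single (insert u F) a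

lemma bd_zero (lo : LinearOrder V) : bd k lo 0 = 0 := Finsupp.sum_zero_index

lemma bd_single (lo : LinearOrder V) (F : Finset V) (a : k) :
    bd k lo (Finsupp.single F a) = a • bdFace k lo F :=
  Finsupp.sum_single_index (zero_smul _ _)

lemma bd_add (lo : LinearOrder V) (c d : Finset V →₀ k) :
    bd k lo (c + d) = bd k lo c + bd k lo d :=
  Finsupp.sum_add_index' (fun _ => zero_smul _ _) (fun _ a b => add_smul a b _)

lemma cone_zero (u : V) : cone k u 0 = 0 := Finsupp.sum_zero_index

lemma cone_single (u : V) (F : Finset V) (a : k) :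
    cone k u (Finsupp.single F a) =
      if u ∈ F then 0 else Finsupp.single (insert u F) a :=
  Finsupp.sum_single_index (by split <;> simp)

lemma cone_add (u : V) (c d : Finset V →₀ k) :
    cone k u (c + d) = cone k u c + cone k u d :=
  Finsupp.sum_add_index' (fun F => by split <;> simp) (fun F a b => by split <;> simp)

/-- `bd` as an additive hom. -/
noncomputable def bdHom (lo : LinearOrder V) : (Finset V →₀ k) →+ (Finset V →₀ k) :=
  AddMonoidHom.mk' (bd k lo) (bd_add k lo)

/-- `cone` as an additive hom. -/
noncomputable def coneHom (u : V) : (Finset V →₀ k) →+ (Finset V →₀ k) :=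
  AddMonoidHom.mk' (cone k u) (cone_add k u)

lemma cone_finset_sum {ι : Type*} (u : V) (s : Finset ι) (f : ι → (Finset V →₀ k)) :
    cone k u (∑ x ∈ s, f x) = ∑ x ∈ s, cone k u (f x) :=
  map_sum (coneHom k u) f s

lemma smul_bdFace (lo : LinearOrder V) (F : Finset V) (a : k) :
    a • bdFace k lo F = letI := lo
      ∑ x ∈ F, Finsupp.single (F.erase x)
        (a * (-1 : k) ^ ((F.filter (fun w => w < x)).card)) := by
  letI := lo
  rw [bdFace, Finset.smul_sum]
  refine Finset.sum_congr rfl fun x hx => ?_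
  rw [smul_smul, Finsupp.smul_single, smul_eq_mul, mul_one, mul_comm]

lemma homotopy_single (lo : LinearOrder V) (u : V) (F : Finset V) (a : k)
    (hu : ∀ w ∈ F, lo.le u w) :
    bd k lo (cone k u (Finsupp.single F a)) + cone k u (bd k lo (Finsupp.single F a)) =
      Finsupp.single F a := by
  letI := lo
  have hflt : ∀ x ∈ F, ¬ x < u := fun x hx => not_lt.mpr (hu x hx)
  rw [cone_single, bd_single, smul_bdFace, cone_finset_sum]
  by_cases huF : u ∈ F
  · rw [if_pos huF, bd_zero, zero_add]
    rw [Finset.sum_eq_single_of_mem u huF]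
    · rw [cone_single, if_neg (Finset.notMem_erase u F), Finset.insert_erase huF,
        Finset.filter_false_of_mem (fun x hx => hflt x hx), Finset.card_empty, pow_zero, mul_one]
    · intro x hx hxu
      rw [cone_single, if_pos (Finset.mem_erase.mpr ⟨hxu.symm, huF⟩)]
  · rw [if_neg huF, bd_single, smul_bdFace, Finset.sum_insert huF]
    have h1 : (insert u F).erase u = F := Finset.erase_insert huF
    have h2 : ((insert u F).filter (fun w => w < u)) = ∅ := by
      apply Finset.filter_false_of_mem
      intro x hx
      rcases Finset.mem_insert.mp hx with h | h
      · subst h; exact lt_irrefl _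
      · exact hflt x h
    have hlt : ∀ x ∈ F, u < x := fun x hx =>
      lt_of_le_of_ne (hu x hx) (fun h => huF (h ▸ hx))
    rw [h1, h2, Finset.card_empty, pow_zero, mul_one]
    have h3 : ∀ x ∈ F, Finsupp.single ((insert u F).erase x)
          (a * (-1 : k) ^ (((insert u F).filter (fun w => w < x)).card))
        = Finsupp.single (insert u (F.erase x))
          (-(a * (-1 : k) ^ ((F.filter (fun w => w < x)).card))) := by
      intro x hx
      have hne : u ≠ x := fun h => huF (h ▸ hx)
      rw [Finset.erase_insert_of_ne hne]
      congr 1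
      have : (insert u F).filter (fun w => w < x) = insert u (F.filter (fun w => w < x)) := by
        rw [Finset.filter_insert, if_pos (hlt x hx)]
      rw [this, Finset.card_insert_of_notMem (fun h => huF (Finset.mem_filter.mp h).1),
        pow_succ]
      ring
    rw [Finset.sum_congr rfl h3]
    have h4 : ∀ x ∈ F, cone k u (Finsupp.single (F.erase x)
          (a * (-1 : k) ^ ((F.filter (fun w => w < x)).card)))
        = Finsupp.single (insert u (F.erase x))
          (a * (-1 : k) ^ ((F.filter (fun w => w < x)).card)) := by
      intro x hx
      rw [cone_single, if_neg (fun h => huF (Finset.mem_of_mem_erase h))]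
    rw [Finset.sum_congr rfl h4, add_assoc, ← Finset.sum_add_distrib]
    have h5 : ∀ x ∈ F, (Finsupp.single (insert u (F.erase x))
          (-(a * (-1 : k) ^ ((F.filter (fun w => w < x)).card)))
        + Finsupp.single (insert u (F.erase x))
          (a * (-1 : k) ^ ((F.filter (fun w => w < x)).card))) = 0 := by
      intro x hx
      rw [← Finsupp.single_add]
      simp
    rw [Finset.sum_congr rfl h5, Finset.sum_const_zero, add_zero]

lemma homotopy (lo : LinearOrder V) (u : V) (c : Finset V →₀ k)
    (hu : ∀ F ∈ c.support, ∀ w ∈ F, lo.le u w) :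
    bd k lo (cone k u c) + cone k u (bd k lo c) = c := by
  induction c using Finsupp.induction with
  | zero => simp [cone_zero, bd_zero]
  | single_add F b f hFf hb ih =>
    have hsupp : (Finsupp.single F b + f).support = insert F f.support := by
      rw [Finsupp.support_add_eq, Finsupp.support_single_ne_zero F hb]
      · rw [← Finset.insert_eq]
      · rw [Finsupp.support_single_ne_zero F hb]
        simpa using hFf
    have hF : ∀ w ∈ F, lo.le u w := by
      intro w hw; exact hu F (by rw [hsupp]; exact Finset.mem_insert_self _ _) w hw
    have hf : ∀ G ∈ f.support, ∀ w ∈ G, lo.le u w := by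
      intro G hG w hw
      exact hu G (by rw [hsupp]; exact Finset.mem_insert_of_mem hG) w hw
    rw [cone_add, bd_add, bd_add, cone_add, add_add_add_comm,
      homotopy_single k lo u F b hF, ih hf]

lemma cone_support (u : V) (c : Finset V →₀ k) :
    (cone k u c).support ⊆
      c.support.biUnion fun F => if u ∈ F then ∅ else {insert u F} := by
  intro G hG
  obtain ⟨F, hF, hGF⟩ := Finset.mem_biUnion.mp (Finsupp.support_sum hG)
  refine Finset.mem_biUnion.mpr ⟨F, hF, ?_⟩
  by_cases huF : u ∈ F
  · rw [if_pos huF] at hGF ⊢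
    simpa using hGF
  · rw [if_neg huF] at hGF ⊢
    exact Finsupp.support_single_subset hGF

lemma exists_fill (lo : LinearOrder V) (S : Finset V) (hS : S.Nonempty) (j : ℕ)
    (c : Finset V →₀ k) (hc : ∀ F ∈ c.support, F ⊆ S ∧ F.card = j)
    (hbd : bd k lo c = 0) :
    ∃ d : Finset V →₀ k, (∀ G ∈ d.support, G ⊆ S ∧ G.card = j + 1) ∧ bd k lo d = c := by
  letI := lo
  set u := S.min' hS with hudef
  have huS : u ∈ S := S.min'_mem hS
  have humin : ∀ w ∈ S, lo.le u w := fun w hw => S.min'_le w hw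
  refine ⟨cone k u c, ?_, ?_⟩
  · intro G hG
    have := cone_support k u c hG
    obtain ⟨F, hF, hGF⟩ := Finset.mem_biUnion.mp this
    by_cases huF : u ∈ F
    · rw [if_pos huF] at hGF; exact absurd hGF (Finset.notMem_empty G)
    · rw [if_neg huF, Finset.mem_singleton] at hGF
      subst hGF
      obtain ⟨hFS, hFcard⟩ := hc F hF
      exact ⟨Finset.insert_subset huS hFS, by rw [Finset.card_insert_of_notMem huF, hFcard]⟩
  · have := homotopy k lo u c (fun F hF w hw => humin w ((hc F hF).1 hw))
    rw [hbd, cone_zero, add_zero] at this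
    exact this

end Generic

end Stmt14Aux


namespace Stmt14Aux

section Eps
variable {V : Type*} [DecidableEq V] (k : Type*) [Field k]

open Classical in
/-- Sum of coefficients over faces satisfying `P`. -/
noncomputable def eps (P : Finset V → Prop) (c : Finset V →₀ k) : k :=
  c.sum fun F a => if P F then a else 0

open Classical in
lemma eps_single (P : Finset V → Prop) (F : Finset V) (a : k) :
    eps k P (Finsupp.single F a) = if P F then a else 0 :=
  Finsupp.sum_single_index (by split <;> simp)

lemma eps_add (P : Finset V → Prop) (c d : Finset V →₀ k) :
    eps k P (c + d) = eps k P c + eps k P d :=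
  Finsupp.sum_add_index' (fun F => by split <;> simp) (fun F a b => by split <;> simp)

/-- `eps` as an additive hom. -/
noncomputable def epsHom (P : Finset V → Prop) : (Finset V →₀ k) →+ k :=
  AddMonoidHom.mk' (eps k P) (eps_add k P)

lemma eps_bd (lo : LinearOrder V) (P : Finset V → Prop) (d : Finset V →₀ k)
    (h : ∀ G ∈ d.support, eps k P ((d G) • bdFace k lo G) = 0) :
    eps k P (bd k lo d) = 0 := by
  rw [bd]
  rw [show eps k P (d.sum fun F a => a • bdFace k lo F)
      = d.sum fun F a => eps k P (a • bdFace k lo F) from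
    map_finsuppSum (epsHom k P) d _]
  rw [Finsupp.sum]
  exact Finset.sum_eq_zero fun G hG => h G hG

open Classical in
lemma eps_pair_lt (lo : LinearOrder V) (P : Finset V → Prop) (x y : V)
    (hlt : lo.lt x y) (hP : P {x} ↔ P {y}) (a : k) :
    eps k P (a • bdFace k lo ({x, y} : Finset V)) = 0 := by
  letI := lo
  have hxy : x ≠ y := ne_of_lt hlt
  rw [smul_bdFace]
  rw [Finset.sum_pair hxy]
  have e1 : ({x, y} : Finset V).erase x = {y} := by
    rw [Finset.erase_insert (by simpa using hxy)]
  have e2 : ({x, y} : Finset V).erase y = {x} := by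
    rw [Finset.erase_insert_of_ne hxy, Finset.erase_singleton]; rfl
  have f1 : ({x, y} : Finset V).filter (fun w => w < x) = ∅ := by
    apply Finset.filter_false_of_mem
    intro w hw
    rcases Finset.mem_insert.mp hw with h | h
    · subst h; exact lt_irrefl _
    · rw [Finset.mem_singleton] at h; subst h; exact not_lt.mpr hlt.le
  have f2 : ({x, y} : Finset V).filter (fun w => w < y) = {x} := by
    rw [show ({x, y} : Finset V) = insert x {y} from rfl, Finset.filter_insert,
      if_pos hlt, Finset.filter_singleton, if_neg (lt_irrefl y)]; rfl
  rw [e1, e2, f1, f2, Finset.card_empty, Finset.card_singleton, eps_add, eps_single, eps_single]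
  by_cases hPx : P ({x} : Finset V)
  · rw [if_pos (hP.mp hPx), if_pos hPx]; ring
  · rw [if_neg (fun h => hPx (hP.mpr h)), if_neg hPx]; ring

lemma eps_pair (lo : LinearOrder V) (P : Finset V → Prop) (x y : V)
    (hxy : x ≠ y) (hP : P {x} ↔ P {y}) (a : k) :
    eps k P (a • bdFace k lo ({x, y} : Finset V)) = 0 := by
  letI := lo
  rcases lt_or_gt_of_ne hxy with h | h
  · exact eps_pair_lt k lo P x y h hP a
  · rw [Finset.pair_comm]
    exact eps_pair_lt k lo P y x h hP.symm a

lemma bdFace_singleton (lo : LinearOrder V) (x : V) :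
    bdFace k lo ({x} : Finset V) = Finsupp.single ∅ 1 := by
  letI := lo
  rw [bdFace, Finset.sum_singleton, Finset.filter_singleton, if_neg (lt_irrefl x),
    Finset.card_empty, pow_zero, Finset.erase_singleton, one_smul]

end Eps

section Graph
variable {V : Type} [DecidableEq V] [Fintype V] (H : SimpleGraph V) [DecidableRel H.Adj]

/-- The set of edges incident to `v`, as a finset of the edge type. -/
def starF (v : V) : Finset H.edgeSet := Finset.univ.filter (fun e => v ∈ (e : Sym2 V))

lemma mem_starF {v : V} {e : H.edgeSet} : e ∈ starF H v ↔ v ∈ (e : Sym2 V) := by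
  simp [starF]

lemma card_starF (v : V) : (starF H v).card = H.degree v := by
  rw [← H.card_incidenceFinset_eq_degree v]
  refine Finset.card_bij (fun e _ => (e : Sym2 V)) ?_ ?_ ?_
  · intro e he
    rw [SimpleGraph.mem_incidenceFinset]
    exact ⟨e.2, (mem_starF H).mp he⟩
  · intro e _ f _ h
    exact Subtype.ext h
  · intro e he
    rw [SimpleGraph.mem_incidenceFinset] at he
    exact ⟨⟨e, he.1⟩, (mem_starF H).mpr he.2, rfl⟩

lemma star_clique {v : V} {s : Finset H.edgeSet} (hs : s ⊆ starF H v) :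
    (H.lineGraph).IsClique (s : Set H.edgeSet) := by
  intro e he f hf hef
  rw [SimpleGraph.lineGraph_adj_iff_exists]
  exact ⟨hef, v, (mem_starF H).mp (hs he), (mem_starF H).mp (hs hf)⟩

lemma edge_eq_of_mem {e : H.edgeSet} {a b : V} (hab : a ≠ b)
    (ha : a ∈ (e : Sym2 V)) (hb : b ∈ (e : Sym2 V)) : (e : Sym2 V) = s(a, b) :=
  (Sym2.mem_and_mem_iff hab).mp ⟨ha, hb⟩

lemma clique_hub {s : Finset H.edgeSet} (h : (H.lineGraph).IsClique (s : Set H.edgeSet))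
    (hcard : 4 ≤ s.card) : ∃ v, s ⊆ starF H v := by
  have hadj : ∀ e ∈ s, ∀ f ∈ s, e ≠ f →
      ∃ v, v ∈ (e : Sym2 V) ∧ v ∈ (f : Sym2 V) := by
    intro e he f hf hef
    exact (SimpleGraph.lineGraph_adj_iff_exists.mp (h he hf hef)).2
  obtain ⟨e1, he1⟩ := Finset.card_pos.mp (by omega : 0 < s.card)
  obtain ⟨a, b, hab⟩ : ∃ x y, (e1 : Sym2 V) = s(x, y) :=
    Sym2.ind (fun x y => ⟨x, y, rfl⟩) (e1 : Sym2 V)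
  have hane : a ≠ b := by
    intro h'
    exact H.not_isDiag_of_mem_edgeSet e1.2 (by rw [hab, Sym2.mk_isDiag_iff]; exact h')
  have hae1 : a ∈ (e1 : Sym2 V) := by rw [hab]; exact Sym2.mem_mk_left a b
  have hbe1 : b ∈ (e1 : Sym2 V) := by rw [hab]; exact Sym2.mem_mk_right a b
  by_cases hA : ∀ e ∈ s, a ∈ (e : Sym2 V)
  · exact ⟨a, fun e he => (mem_starF H).mpr (hA e he)⟩
  by_cases hB : ∀ e ∈ s, b ∈ (e : Sym2 V)
  · exact ⟨b, fun e he => (mem_starF H).mpr (hB e he)⟩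
  push_neg at hA hB
  obtain ⟨f, hfs, haf⟩ := hA
  obtain ⟨g, hgs, hbg⟩ := hB
  have hfe1 : f ≠ e1 := fun h' => haf (h' ▸ hae1)
  have hge1 : g ≠ e1 := fun h' => hbg (h' ▸ hbe1)
  have hbf : b ∈ (f : Sym2 V) := by
    obtain ⟨x, hx1, hxf⟩ := hadj e1 he1 f hfs hfe1.symm
    rw [hab, Sym2.mem_iff] at hx1
    rcases hx1 with h' | h'
    · exact absurd (h' ▸ hxf) haf
    · exact h' ▸ hxf
  have hag : a ∈ (g : Sym2 V) := by
    obtain ⟨x, hx1, hxg⟩ := hadj e1 he1 g hgs hge1.symm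
    rw [hab, Sym2.mem_iff] at hx1
    rcases hx1 with h' | h'
    · exact h' ▸ hxg
    · exact absurd (h' ▸ hxg) hbg
  have hfg : f ≠ g := fun h' => hbg (h' ▸ hbf)
  obtain ⟨c, hc⟩ : ∃ c, (f : Sym2 V) = s(b, c) := Sym2.mem_iff_exists.mp hbf
  have hca : c ≠ a := by
    intro h'
    apply haf
    rw [hc, h']
    exact Sym2.mem_mk_right b a
  have hcb : c ≠ b := by
    intro h'
    exact H.not_isDiag_of_mem_edgeSet f.2 (by rw [hc, Sym2.mk_isDiag_iff]; exact h'.symm)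
  have hcf : c ∈ (f : Sym2 V) := by rw [hc]; exact Sym2.mem_mk_right b c
  have hcg : c ∈ (g : Sym2 V) := by
    obtain ⟨x, hxf, hxg⟩ := hadj f hfs g hgs hfg
    rw [hc, Sym2.mem_iff] at hxf
    rcases hxf with h' | h'
    · exact absurd (h' ▸ hxg) hbg
    · exact h' ▸ hxg
  have hgeq : (g : Sym2 V) = s(a, c) := edge_eq_of_mem H hca.symm hag hcg
  -- a fourth edge
  have hnotsub : ¬ s ⊆ ({e1, f, g} : Finset H.edgeSet) := by
    intro h'
    have := Finset.card_le_card h'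
    have h3 : ({e1, f, g} : Finset H.edgeSet).card ≤ 3 :=
      (Finset.card_insert_le _ _).trans (by
        exact Nat.succ_le_succ ((Finset.card_insert_le _ _).trans (by simp)))
    omega
  obtain ⟨h', hh's, hh'notin⟩ := Finset.not_subset.mp hnotsub
  simp only [Finset.mem_insert, Finset.mem_singleton, not_or] at hh'notin
  obtain ⟨hne1, hnf, hng⟩ := hh'notin
  -- case analysis on which of a, b, c lie on h'
  by_cases ha' : a ∈ (h' : Sym2 V)
  · by_cases hb' : b ∈ (h' : Sym2 V)
    · exact absurd (Subtype.ext ((edge_eq_of_mem H hane ha' hb').trans hab.symm)) hne1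
    by_cases hc' : c ∈ (h' : Sym2 V)
    · exact absurd (Subtype.ext ((edge_eq_of_mem H hca.symm ha' hc').trans hgeq.symm)) hng
    obtain ⟨x, hxf, hxh⟩ := hadj f hfs h' hh's (fun h'' => hnf h''.symm)
    rw [hc, Sym2.mem_iff] at hxf
    rcases hxf with h'' | h''
    · exact absurd (h'' ▸ hxh) hb'
    · exact absurd (h'' ▸ hxh) hc'
  · by_cases hb' : b ∈ (h' : Sym2 V)
    · by_cases hc' : c ∈ (h' : Sym2 V)
      · exact absurd (Subtype.ext ((edge_eq_of_mem H hcb.symm hb' hc').trans hc.symm)) hnf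
      obtain ⟨x, hxg, hxh⟩ := hadj g hgs h' hh's (fun h'' => hng h''.symm)
      rw [hgeq, Sym2.mem_iff] at hxg
      rcases hxg with h'' | h''
      · exact absurd (h'' ▸ hxh) ha'
      · exact absurd (h'' ▸ hxh) hc'
    · obtain ⟨x, hx1, hxh⟩ := hadj e1 he1 h' hh's (fun h'' => hne1 h''.symm)
      rw [hab, Sym2.mem_iff] at hx1
      rcases hx1 with h'' | h''
      · exact absurd (h'' ▸ hxh) ha'
      · exact absurd (h'' ▸ hxh) hb'

lemma adj_of_mem_mem {x : H.edgeSet} {a b : V} (hab : a ≠ b)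
    (ha : a ∈ (x : Sym2 V)) (hb : b ∈ (x : Sym2 V)) : H.Adj a b := by
  have h := edge_eq_of_mem H hab ha hb
  exact H.mem_edgeSet.mp (h ▸ x.2)

lemma star_mem_skeleton {i : ℕ} {v : V} (hdeg : i + 1 ≤ H.degree v) {G : Finset H.edgeSet}
    (hG : G ⊆ starF H v) (hcard : G.card ≤ i + 1) :
    G ∈ pureSkeleton (cliqueComplex (H.lineGraph)) i := by
  obtain ⟨F, hGF, hFstar, hFcard⟩ :=
    Finset.exists_subsuperset_card_eq hG hcard (by rw [card_starF]; exact hdeg)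
  exact ⟨F, star_clique H hFstar, hFcard, hGF⟩

lemma skeleton_mem {i : ℕ} (hi : 3 ≤ i) {G : Finset H.edgeSet}
    (hG : G ∈ pureSkeleton (cliqueComplex (H.lineGraph)) i) :
    ∃ v, i + 1 ≤ H.degree v ∧ G ⊆ starF H v ∧ G.card ≤ i + 1 := by
  obtain ⟨F, hFcl, hFcard, hGF⟩ := hG
  obtain ⟨v, hv⟩ := clique_hub H hFcl (by omega)
  refine ⟨v, ?_, hGF.trans hv, hFcard ▸ Finset.card_le_card hGF⟩
  calc i + 1 = F.card := hFcard.symm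
    _ ≤ (starF H v).card := Finset.card_le_card hv
    _ = H.degree v := card_starF H v

end Graph

end Stmt14Aux

theorem stmt14 {V : Type} [DecidableEq V] [Fintype V] (H : SimpleGraph V)
    [DecidableRel H.Adj] (hconn : H.Connected) :
    (∀ i : ℕ, 3 ≤ i → (∃ F ∈ cliqueComplex (SimpleGraph.lineGraph H), F.card = i + 1) →
      ∀ (k : Type) [Field k],
        IsCMover k (pureSkeleton (cliqueComplex (SimpleGraph.lineGraph H)) i)) ↔
    (∀ v w : V, 4 ≤ H.degree v → 4 ≤ H.degree w → v = w) := by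
  open Stmt14Aux in
  constructor
  · -- Forward direction
    intro hCM v w hv hw
    by_contra hvw
    -- a linear order on the edge type
    let lo : LinearOrder H.edgeSet :=
      LinearOrder.lift' (fun e => (Fintype.equivFin H.edgeSet) e)
        (Equiv.injective _)
    set K := pureSkeleton (cliqueComplex (H.lineGraph)) 3 with hKdef
    have memK : ∀ G : Finset H.edgeSet,
        G ∈ K ↔ ∃ z, 4 ≤ H.degree z ∧ G ⊆ starF H z ∧ G.card ≤ 4 := by
      intro G
      constructor
      · intro hG
        obtain ⟨z, h1, h2, h3⟩ := skeleton_mem H (le_refl 3) hG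
        exact ⟨z, h1, h2, h3⟩
      · rintro ⟨z, h1, h2, h3⟩
        exact star_mem_skeleton H h1 h2 h3
    -- nonemptiness input (for `i = 3`) and the specialized CM hypothesis
    obtain ⟨F₂, hF₂sub, hF₂card⟩ :=
      Finset.exists_subset_card_eq (show 4 ≤ (starF H v).card by
        rw [card_starF]; exact hv)
    have hCM3 : IsCMover ℚ K :=
      hCM 3 le_rfl ⟨F₂, star_clique H hF₂sub, hF₂card⟩ ℚ
    by_cases hadj : ∃ p q : V, p ≠ q ∧ 4 ≤ H.degree p ∧ 4 ≤ H.degree q ∧ H.Adj p q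
    · -- Case A: two adjacent vertices of degree ≥ 4
      obtain ⟨p, q, hpq, hp, hq, hpqadj⟩ := hadj
      set e0 : H.edgeSet := ⟨s(p, q), H.mem_edgeSet.mpr hpqadj⟩ with he0def
      have he0p : e0 ∈ starF H p := (mem_starF H).mpr (Sym2.mem_mk_left p q)
      have he0q : e0 ∈ starF H q := (mem_starF H).mpr (Sym2.mem_mk_right p q)
      set F0 : Finset H.edgeSet := {e0} with hF0def
      have hF0K : F0 ∈ K := (memK F0).mpr
        ⟨p, hp, by rw [hF0def]; exact Finset.singleton_subset_iff.mpr he0p,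
          by rw [hF0def]; simp⟩
      have hpcard : 3 ≤ ((starF H p).erase e0).card := by
        rw [Finset.card_erase_of_mem he0p, card_starF]; omega
      have hqcard : 1 ≤ ((starF H q).erase e0).card := by
        rw [Finset.card_erase_of_mem he0q, card_starF]; omega
      obtain ⟨t, htsub, htcard⟩ :=
        Finset.exists_subset_card_eq (show 2 ≤ ((starF H p).erase e0).card by omega)
      obtain ⟨f1, hf1⟩ := Finset.card_pos.mp (show 0 < ((starF H p).erase e0).card by omega)
      obtain ⟨f2, hf2⟩ := Finset.card_pos.mp (show 0 < ((starF H q).erase e0).card by omega)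
      rw [Finset.mem_erase] at hf1 hf2
      have hf1p : p ∈ (f1 : Sym2 V) := (mem_starF H).mp hf1.2
      have hf2q : q ∈ (f2 : Sym2 V) := (mem_starF H).mp hf2.2
      have hf2np : p ∉ (f2 : Sym2 V) := by
        intro hcon
        exact hf2.1 (Subtype.ext (edge_eq_of_mem H hpq hcon hf2q))
      -- singletons in the link
      have hsing : ∀ (z : V) (f : H.edgeSet), 4 ≤ H.degree z → e0 ∈ starF H z →
          f ∈ starF H z → f ≠ e0 →
          ({f} : Finset H.edgeSet) ∈ linkFace K F0 := by
        intro z f hz hez hfz hfne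
        constructor
        · rw [hF0def, Finset.disjoint_singleton_left, Finset.mem_singleton]
          exact fun h => hfne h.symm
        · apply (memK _).mpr
          refine ⟨z, hz, ?_, ?_⟩
          · rw [hF0def]
            intro x hx
            rcases Finset.mem_union.mp hx with h | h
            · rw [Finset.mem_singleton] at h; exact h ▸ hez
            · rw [Finset.mem_singleton] at h; exact h ▸ hfz
          · exact (Finset.card_union_le _ _).trans (by rw [hF0def]; simp)
      have hex : ∃ G ∈ linkFace K F0, 1 < G.card := by
        refine ⟨t, ⟨?_, ?_⟩, by omega⟩
        · rw [hF0def, Finset.disjoint_singleton_left]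
          exact fun h => (Finset.mem_erase.mp (htsub h)).1 rfl
        · apply (memK _).mpr
          refine ⟨p, hp, ?_, ?_⟩
          · apply Finset.union_subset
            · rw [hF0def]; exact Finset.singleton_subset_iff.mpr he0p
            · exact htsub.trans (Finset.erase_subset _ _)
          · refine (Finset.card_union_le _ _).trans ?_
            rw [hF0def, htcard]; simp
      set c : Finset H.edgeSet →₀ ℚ :=
        Finsupp.single {f1} 1 + Finsupp.single {f2} (-1) with hcdef
      have hcsupp : ∀ F' ∈ c.support, F' ∈ linkFace K F0 ∧ F'.card = 1 := by
        intro F' hF'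
        have := Finsupp.support_add hF'
        rw [Finset.mem_union] at this
        have hmem : F' = {f1} ∨ F' = {f2} := by
          rcases this with h | h
          · exact Or.inl (Finset.mem_singleton.mp (Finsupp.support_single_subset h))
          · exact Or.inr (Finset.mem_singleton.mp (Finsupp.support_single_subset h))
        rcases hmem with h | h
        · subst h; exact ⟨hsing p f1 hp he0p hf1.2 hf1.1, by simp⟩
        · subst h; exact ⟨hsing q f2 hq he0q hf2.2 hf2.1, by simp⟩
      have hbdc : bd ℚ lo c = 0 := by
        rw [hcdef, bd_add, bd_single, bd_single, bdFace_singleton, bdFace_singleton]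
        simp
      obtain ⟨d, hd, hbdd⟩ := hCM3 F0 hF0K 1 hex lo c hcsupp hbdc
      set P : Finset H.edgeSet → Prop :=
        fun F' => ∃ x ∈ F', p ∈ (x : Sym2 V) ∧ x ≠ e0 with hPdef
      have hepsc : eps ℚ P c = 1 := by
        rw [hcdef, eps_add, eps_single, eps_single,
          if_pos ⟨f1, Finset.mem_singleton_self f1, hf1p, hf1.1⟩, if_neg]
        · norm_num
        · rintro ⟨x, hx, hpx, -⟩
          rw [Finset.mem_singleton] at hx
          exact hf2np (hx ▸ hpx)
      have heps0 : eps ℚ P (bd ℚ lo d) = 0 := by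
        apply eps_bd
        intro G hG
        obtain ⟨hGlink, hGcard⟩ := hd G hG
        obtain ⟨x, y, hxy, hGxy⟩ := Finset.card_eq_two.mp hGcard
        subst hGxy
        obtain ⟨hdis, hun⟩ := hGlink
        have hxe0 : x ≠ e0 := by
          intro h
          subst h
          exact Finset.disjoint_left.mp hdis
            (by rw [hF0def]; exact Finset.mem_singleton_self e0)
            (Finset.mem_insert_self _ _)
        have hye0 : y ≠ e0 := by
          intro h
          subst h
          exact Finset.disjoint_left.mp hdis
            (by rw [hF0def]; exact Finset.mem_singleton_self e0)
            (Finset.mem_insert_of_mem (Finset.mem_singleton_self e0))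
        obtain ⟨z, hz, hzsub, -⟩ := (memK _).mp hun
        have hze0 : z ∈ (e0 : Sym2 V) := (mem_starF H).mp
          (hzsub (Finset.mem_union_left _ (by rw [hF0def]; simp)))
        have hzx : z ∈ (x : Sym2 V) := (mem_starF H).mp
          (hzsub (Finset.mem_union_right _ (Finset.mem_insert_self x {y})))
        have hzy : z ∈ (y : Sym2 V) := (mem_starF H).mp
          (hzsub (Finset.mem_union_right _
            (Finset.mem_insert_of_mem (Finset.mem_singleton_self y))))
        have hzpq : z = p ∨ z = q := by
          rw [he0def] at hze0
          exact Sym2.mem_iff.mp hze0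
        have hPiff : P {x} ↔ P {y} := by
          rcases hzpq with h | h
          · subst h
            exact iff_of_true ⟨x, Finset.mem_singleton_self x, hzx, hxe0⟩
              ⟨y, Finset.mem_singleton_self y, hzy, hye0⟩
          · subst h
            apply iff_of_false
            · rintro ⟨x', hx', hpx', hx'ne⟩
              rw [Finset.mem_singleton] at hx'
              subst hx'
              exact hx'ne (Subtype.ext (edge_eq_of_mem H hpq hpx' hzx))
            · rintro ⟨y', hy', hpy', hy'ne⟩
              rw [Finset.mem_singleton] at hy'
              subst hy'
              exact hy'ne (Subtype.ext (edge_eq_of_mem H hpq hpy' hzy))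
        exact eps_pair ℚ lo P x y hxy hPiff (d (insert x {y}))
      rw [hbdd, hepsc] at heps0
      exact one_ne_zero heps0
    · -- Case B: no two adjacent vertices of degree ≥ 4
      push_neg at hadj
      have hvwne : v ≠ w := hvw
      have hnadj : ¬ H.Adj v w := hadj v w hvwne hv hw
      set F0 : Finset H.edgeSet := ∅ with hF0def
      have hF0K : F0 ∈ K := (memK F0).mpr ⟨v, hv, by simp [hF0def], by simp [hF0def]⟩
      have hlink0 : ∀ G : Finset H.edgeSet, G ∈ linkFace K F0 ↔ G ∈ K := by
        intro G; rw [hF0def]; simp [linkFace]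
      have hvcard : 4 ≤ (starF H v).card := by rw [card_starF]; exact hv
      have hwcard : 4 ≤ (starF H w).card := by rw [card_starF]; exact hw
      obtain ⟨t, htsub, htcard⟩ :=
        Finset.exists_subset_card_eq (show 2 ≤ (starF H v).card by omega)
      obtain ⟨f1, hf1⟩ := Finset.card_pos.mp (show 0 < (starF H v).card by omega)
      obtain ⟨f2, hf2⟩ := Finset.card_pos.mp (show 0 < (starF H w).card by omega)
      have hf1v : v ∈ (f1 : Sym2 V) := (mem_starF H).mp hf1
      have hf2w : w ∈ (f2 : Sym2 V) := (mem_starF H).mp hf2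
      have hf2nv : v ∉ (f2 : Sym2 V) := by
        intro hcon
        exact hnadj (adj_of_mem_mem H hvwne hcon hf2w)
      have hex : ∃ G ∈ linkFace K F0, 1 < G.card := by
        refine ⟨t, (hlink0 t).mpr ((memK t).mpr ⟨v, hv, htsub, by omega⟩), by omega⟩
      set c : Finset H.edgeSet →₀ ℚ :=
        Finsupp.single {f1} 1 + Finsupp.single {f2} (-1) with hcdef
      have hcsupp : ∀ F' ∈ c.support, F' ∈ linkFace K F0 ∧ F'.card = 1 := by
        intro F' hF'
        have := Finsupp.support_add hF'
        rw [Finset.mem_union] at this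
        have hmem : F' = {f1} ∨ F' = {f2} := by
          rcases this with h | h
          · exact Or.inl (Finset.mem_singleton.mp (Finsupp.support_single_subset h))
          · exact Or.inr (Finset.mem_singleton.mp (Finsupp.support_single_subset h))
        rcases hmem with h | h
        · subst h
          exact ⟨(hlink0 _).mpr ((memK _).mpr
            ⟨v, hv, Finset.singleton_subset_iff.mpr hf1, by simp⟩), by simp⟩
        · subst h
          exact ⟨(hlink0 _).mpr ((memK _).mpr
            ⟨w, hw, Finset.singleton_subset_iff.mpr hf2, by simp⟩), by simp⟩
      have hbdc : bd ℚ lo c = 0 := by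
        rw [hcdef, bd_add, bd_single, bd_single, bdFace_singleton, bdFace_singleton]
        simp
      obtain ⟨d, hd, hbdd⟩ := hCM3 F0 hF0K 1 hex lo c hcsupp hbdc
      set P : Finset H.edgeSet → Prop :=
        fun F' => ∃ x ∈ F', v ∈ (x : Sym2 V) with hPdef
      have hepsc : eps ℚ P c = 1 := by
        rw [hcdef, eps_add, eps_single, eps_single,
          if_pos ⟨f1, Finset.mem_singleton_self f1, hf1v⟩, if_neg]
        · norm_num
        · rintro ⟨x, hx, hvx⟩
          rw [Finset.mem_singleton] at hx
          exact hf2nv (hx ▸ hvx)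
      have heps0 : eps ℚ P (bd ℚ lo d) = 0 := by
        apply eps_bd
        intro G hG
        obtain ⟨hGlink, hGcard⟩ := hd G hG
        obtain ⟨x, y, hxy, hGxy⟩ := Finset.card_eq_two.mp hGcard
        subst hGxy
        obtain ⟨z, hz, hzsub, -⟩ := (memK _).mp ((hlink0 _).mp hGlink)
        have hzx : z ∈ (x : Sym2 V) := (mem_starF H).mp
          (hzsub (Finset.mem_insert_self x {y}))
        have hzy : z ∈ (y : Sym2 V) := (mem_starF H).mp
          (hzsub (Finset.mem_insert_of_mem (Finset.mem_singleton_self y)))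
        have hPiff : P {x} ↔ P {y} := by
          by_cases hzv : z = v
          · subst hzv
            exact iff_of_true ⟨x, Finset.mem_singleton_self x, hzx⟩
              ⟨y, Finset.mem_singleton_self y, hzy⟩
          · apply iff_of_false
            · rintro ⟨x', hx', hvx'⟩
              rw [Finset.mem_singleton] at hx'
              subst hx'
              exact hadj z v hzv hz hv (adj_of_mem_mem H hzv hzx hvx')
            · rintro ⟨y', hy', hvy'⟩
              rw [Finset.mem_singleton] at hy'
              subst hy'
              exact hadj z v hzv hz hv (adj_of_mem_mem H hzv hzy hvy')
        exact eps_pair ℚ lo P x y hxy hPiff (d (insert x {y}))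
      rw [hbdd, hepsc] at heps0
      exact one_ne_zero heps0
  · -- Backward direction
    intro hdeg i hi hne k _
    set K := pureSkeleton (cliqueComplex (H.lineGraph)) i with hKdef
    obtain ⟨F₁, hF₁cl, hF₁card⟩ := hne
    have hF₁K : F₁ ∈ K := ⟨F₁, hF₁cl, hF₁card, Finset.Subset.refl _⟩
    obtain ⟨v0, hv0deg, _, _⟩ := skeleton_mem H hi hF₁K
    have memK : ∀ G : Finset H.edgeSet, G ∈ K ↔ G ⊆ starF H v0 ∧ G.card ≤ i + 1 := by
      intro G
      constructor
      · intro hG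
        obtain ⟨z, h1, h2, h3⟩ := skeleton_mem H hi hG
        have : z = v0 := hdeg z v0 (by omega) (by omega)
        exact ⟨this ▸ h2, h3⟩
      · rintro ⟨h1, h2⟩
        exact star_mem_skeleton H hv0deg h1 h2
    intro F hF j hex lo c hc hbd
    obtain ⟨hFsub, hFcard⟩ := (memK F).mp hF
    set S : Finset H.edgeSet := starF H v0 \ F with hSdef
    have hlink : ∀ G : Finset H.edgeSet,
        G ∈ linkFace K F ↔ G ⊆ S ∧ G.card + F.card ≤ i + 1 := by
      intro G
      constructor
      · rintro ⟨hdis, hun⟩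
        obtain ⟨h1, h2⟩ := (memK _).mp hun
        constructor
        · intro x hxG
          rw [hSdef, Finset.mem_sdiff]
          exact ⟨h1 (Finset.mem_union_right F hxG), Finset.disjoint_right.mp hdis hxG⟩
        · have h3 := Finset.card_union_of_disjoint hdis
          omega
      · rintro ⟨h1, h2⟩
        have hdis : Disjoint F G := Finset.disjoint_right.mpr
          (fun x hxG => (Finset.mem_sdiff.mp (h1 hxG)).2)
        refine ⟨hdis, (memK _).mpr ⟨?_, ?_⟩⟩
        · exact Finset.union_subset hFsub (h1.trans (Finset.sdiff_subset))
        · rw [Finset.card_union_of_disjoint hdis]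
          omega
    obtain ⟨G0, hG0, hjG0⟩ := hex
    obtain ⟨hG0S, hG0card⟩ := (hlink G0).mp hG0
    have hSne : S.Nonempty := by
      obtain ⟨x, hx⟩ := Finset.card_pos.mp (show 0 < G0.card by omega)
      exact ⟨x, hG0S hx⟩
    obtain ⟨d, hd, hbdd⟩ := exists_fill k lo S hSne j c
      (fun F' hF' => ⟨((hlink F').mp (hc F' hF').1).1, (hc F' hF').2⟩) hbd
    refine ⟨d, fun G hG => ?_, hbdd⟩
    obtain ⟨hGS, hGcard⟩ := hd G hG
    refine ⟨(hlink G).mpr ⟨hGS, ?_⟩, hGcard⟩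
    omega
end

section
/- Let H be a connected simple graph with two distinct vertices v_1, v_2 each of degree ≥ 4, and let Δ = Δ(L(H)). Then Δ^[4] is not strongly connected: a 4-star of H at v_1 and a 4-star at v_2 are facets of Δ^[4] that cannot be joined by a sequence of facets in which consecutive facets share 4 elements. -/
open Finset SimpleGraph

variable {V : Type*} [DecidableEq V]

set_option linter.unusedSectionVars false

section MyAux


variable {H : SimpleGraph V}

lemma myaux_star_clique (S : Finset H.edgeSet) (v : V)
    (h : ∀ e ∈ S, v ∈ (e : Sym2 V)) : (H.lineGraph).IsClique (S : Set H.edgeSet) :=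
  fun e he f hf hne => (lineGraph_adj_iff_exists).2 ⟨hne, v, h e he, h f hf⟩

lemma myaux_two_common (T : Finset H.edgeSet) (v w : V) (hvw : v ≠ w)
    (h : ∀ e ∈ T, v ∈ (e : Sym2 V) ∧ w ∈ (e : Sym2 V)) : T.card ≤ 1 :=
  Finset.card_le_one.2 fun e he f hf =>
    Subtype.ext (Sym2.eq_of_ne_mem hvw (h e he).1 (h e he).2 (h f hf).1 (h f hf).2)

lemma myaux_common_vertex (S : Finset H.edgeSet)
    (hcl : (H.lineGraph).IsClique (S : Set H.edgeSet)) (hcard : S.card = 4) :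
    ∃ v : V, ∀ e ∈ S, v ∈ (e : Sym2 V) := by
  have hadj : ∀ e ∈ S, ∀ f ∈ S, e ≠ f → ∃ x, x ∈ (e : Sym2 V) ∧ x ∈ (f : Sym2 V) :=
    fun e he f hf hne => ((lineGraph_adj_iff_exists).1 (hcl he hf hne)).2
  obtain ⟨e1, he1⟩ : S.Nonempty := by rw [← Finset.card_pos, hcard]; norm_num
  obtain ⟨a, b, hab⟩ : ∃ a b, (e1 : Sym2 V) = s(a, b) :=
    Sym2.inductionOn (f := fun z => z = (e1 : Sym2 V) → ∃ a b, (e1 : Sym2 V) = s(a, b))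
      (e1 : Sym2 V) (fun x y h => ⟨x, y, h.symm⟩) rfl
  have hndiag := H.not_isDiag_of_mem_edgeSet e1.2
  have haneb : a ≠ b := by rw [hab] at hndiag; simpa using hndiag
  have ha1 : a ∈ (e1 : Sym2 V) := by rw [hab]; exact Sym2.mem_mk_left a b
  have hb1 : b ∈ (e1 : Sym2 V) := by rw [hab]; exact Sym2.mem_mk_right a b
  by_cases hA : ∀ e ∈ S, a ∈ (e : Sym2 V)
  · exact ⟨a, hA⟩
  by_cases hB : ∀ e ∈ S, b ∈ (e : Sym2 V)
  · exact ⟨b, hB⟩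
  exfalso
  push_neg at hA hB
  obtain ⟨e2, he2, ha2⟩ := hA
  obtain ⟨e3, he3, hb3⟩ := hB
  have h12 : e1 ≠ e2 := fun h => ha2 (h ▸ ha1)
  have h13 : e1 ≠ e3 := fun h => hb3 (h ▸ hb1)
  obtain ⟨x, hx1, hx2⟩ := hadj e1 he1 e2 he2 h12
  have hb2 : b ∈ (e2 : Sym2 V) := by
    rw [hab] at hx1
    rcases Sym2.mem_iff.1 hx1 with rfl | rfl
    · exact absurd hx2 ha2
    · exact hx2
  obtain ⟨y, hy1, hy3⟩ := hadj e1 he1 e3 he3 h13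
  have ha3 : a ∈ (e3 : Sym2 V) := by
    rw [hab] at hy1
    rcases Sym2.mem_iff.1 hy1 with rfl | rfl
    · exact hy3
    · exact absurd hy3 hb3
  set c := Sym2.Mem.other hb2 with hc
  have he2eq : (e2 : Sym2 V) = s(b, c) := (Sym2.other_spec hb2).symm
  have hcb : c ≠ b := Sym2.other_ne (H.not_isDiag_of_mem_edgeSet e2.2) hb2
  have hcmem : c ∈ (e2 : Sym2 V) := Sym2.other_mem hb2
  have hca : c ≠ a := fun h => ha2 (h ▸ hcmem)
  have h23 : e2 ≠ e3 := fun h => hb3 (h ▸ hb2)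
  obtain ⟨z, hz2, hz3⟩ := hadj e2 he2 e3 he3 h23
  have hc3 : c ∈ (e3 : Sym2 V) := by
    rw [he2eq] at hz2
    rcases Sym2.mem_iff.1 hz2 with rfl | rfl
    · exact absurd hz3 hb3
    · exact hz3
  have he3eq : (e3 : Sym2 V) = s(a, c) := (Sym2.mem_and_mem_iff hca.symm).1 ⟨ha3, hc3⟩
  have hsub : ¬ S ⊆ ({e1, e2, e3} : Finset H.edgeSet) := by
    intro hsub
    have hle := Finset.card_le_card hsub
    have h3 : ({e1, e2, e3} : Finset H.edgeSet).card ≤ 3 := by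
      refine le_trans (Finset.card_insert_le _ _) (Nat.succ_le_succ ?_)
      refine le_trans (Finset.card_insert_le _ _) (Nat.succ_le_succ ?_)
      simp
    omega
  obtain ⟨e4, he4, hnot⟩ := Finset.not_subset.1 hsub
  simp only [Finset.mem_insert, Finset.mem_singleton, not_or] at hnot
  obtain ⟨h41, h42, h43⟩ := hnot
  obtain ⟨p, hp4, hp1⟩ := hadj e4 he4 e1 he1 h41
  rw [hab] at hp1
  rcases Sym2.mem_iff.1 hp1 with rfl | rfl
  · -- p = a ∈ e4
    obtain ⟨q, hq4, hq2⟩ := hadj e4 he4 e2 he2 h42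
    rw [he2eq] at hq2
    rcases Sym2.mem_iff.1 hq2 with rfl | rfl
    · exact h41 (Subtype.ext (((Sym2.mem_and_mem_iff haneb).1 ⟨hp4, hq4⟩).trans hab.symm))
    · exact h43 (Subtype.ext (((Sym2.mem_and_mem_iff hca.symm).1 ⟨hp4, hq4⟩).trans he3eq.symm))
  · -- p = b ∈ e4
    obtain ⟨r, hr4, hr3⟩ := hadj e4 he4 e3 he3 h43
    rw [he3eq] at hr3
    rcases Sym2.mem_iff.1 hr3 with rfl | rfl
    · exact h41 (Subtype.ext (((Sym2.mem_and_mem_iff haneb).1 ⟨hr4, hp4⟩).trans hab.symm))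
    · exact h42 (Subtype.ext (((Sym2.mem_and_mem_iff hcb.symm).1 ⟨hp4, hr4⟩).trans he2eq.symm))

lemma myaux_facet_of_clique (S : Finset H.edgeSet)
    (hcl : (H.lineGraph).IsClique (S : Set H.edgeSet)) (hcard : S.card = 4) :
    IsFacet (pureSkeleton (cliqueComplex H.lineGraph) 3) S := by
  constructor
  · exact ⟨S, hcl, hcard, subset_refl S⟩
  · intro G hG hSG
    obtain ⟨F', hF', hF'card, hGF'⟩ := hG
    have hle : G.card ≤ 4 := by have := Finset.card_le_card hGF'; omega
    exact Finset.eq_of_subset_of_card_le hSG (by omega)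

lemma myaux_facet_clique (G : Finset H.edgeSet)
    (h : IsFacet (pureSkeleton (cliqueComplex H.lineGraph) 3) G) :
    (H.lineGraph).IsClique (G : Set H.edgeSet) ∧ G.card = 4 := by
  obtain ⟨⟨F', hF', hF'card, hGF'⟩, hmax⟩ := h
  have hF'K : F' ∈ pureSkeleton (cliqueComplex H.lineGraph) 3 :=
    ⟨F', hF', hF'card, subset_refl _⟩
  have hGF : G = F' := hmax F' hF'K hGF'
  subst hGF
  exact ⟨hF', hF'card⟩

lemma myaux_invariant (v : V) (E G : Finset H.edgeSet)
    (hEv : ∀ e ∈ E, v ∈ (e : Sym2 V))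
    (h : Relation.ReflTransGen (FacetAdj (pureSkeleton (cliqueComplex H.lineGraph) 3)) E G) :
    ∀ e ∈ G, v ∈ (e : Sym2 V) := by
  induction h with
  | refl => exact hEv
  | @tail b c hEb hbc ih =>
    obtain ⟨hFb, hFc, h1, h2⟩ := hbc
    obtain ⟨hclc, hcardc⟩ := myaux_facet_clique _ hFc
    obtain ⟨hclb, hcardb⟩ := myaux_facet_clique _ hFb
    obtain ⟨w, hw⟩ := myaux_common_vertex _ hclc hcardc
    by_cases hvw : v = w
    · subst hvw; exact hw
    · exfalso
      have hle := myaux_two_common (b ∩ c) v w hvw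
        (fun e he => ⟨ih e (Finset.mem_inter.1 he).1, hw e (Finset.mem_inter.1 he).2⟩)
      rw [hcardb] at h1
      omega

end MyAux

/-- Here the pure skeleton of the clique complex generated by the
faces of cardinality `4` (the `4`-stars have `4` elements) is used. -/
theorem stmt15 {V : Type} [DecidableEq V] [Fintype V] (H : SimpleGraph V)
    [DecidableRel H.Adj] (hconn : H.Connected) (v₁ v₂ : V) (hne : v₁ ≠ v₂)
    (hd1 : 4 ≤ H.degree v₁) (hd2 : 4 ≤ H.degree v₂)
    (E F : Finset H.edgeSet) (hEcard : E.card = 4) (hFcard : F.card = 4)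
    (hEv : ∀ e ∈ E, v₁ ∈ (e : Sym2 V)) (hFv : ∀ e ∈ F, v₂ ∈ (e : Sym2 V)) :
    IsFacet (pureSkeleton (cliqueComplex (SimpleGraph.lineGraph H)) 3) E ∧
    IsFacet (pureSkeleton (cliqueComplex (SimpleGraph.lineGraph H)) 3) F ∧
    ¬ Relation.ReflTransGen
        (FacetAdj (pureSkeleton (cliqueComplex (SimpleGraph.lineGraph H)) 3)) E F ∧
    ¬ StronglyConnected (pureSkeleton (cliqueComplex (SimpleGraph.lineGraph H)) 3) := by
  have hEcl := myaux_star_clique E v₁ hEv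
  have hFcl := myaux_star_clique F v₂ hFv
  have hEf := myaux_facet_of_clique E hEcl hEcard
  have hFf := myaux_facet_of_clique F hFcl hFcard
  have hnot : ¬ Relation.ReflTransGen
      (FacetAdj (pureSkeleton (cliqueComplex (SimpleGraph.lineGraph H)) 3)) E F := by
    intro h
    have hall := myaux_invariant v₁ E F hEv h
    have hle := myaux_two_common F v₁ v₂ hne (fun e he => ⟨hall e he, hFv e he⟩)
    omega
  exact ⟨hEf, hFf, hnot, fun hsc => hnot (hsc.2 E F hEf hFf)⟩
end

section
/- Let H_0 be a connected simple graph with exactly one vertex v of degree r > 3, all other vertices of degree at most 3, and every degree-2 vertex contained in a triangle. Define the level of a vertex as its distance to v. If the pure 2-skeleton of Δ(L(H_0)) is strongly connected, then every vertex x of H_0 with level ≥ 2 and degree 3 has level exactly 2 and is adjacent to both endpoints of an edge joining two level-1 vertices. -/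
open Finset SimpleGraph

variable {V : Type*} [DecidableEq V]

set_option linter.unusedSectionVars false

namespace Stmt16

variable {V : Type} [DecidableEq V] [Fintype V] (H : SimpleGraph V) [DecidableRel H.Adj]

/-- The pure 2-skeleton of the clique complex of the line graph. -/
def LK : Set (Finset H.edgeSet) := pureSkeleton (cliqueComplex (SimpleGraph.lineGraph H)) 2

/-- The star of a vertex: the set of edges at `w`, as a finset of `H.edgeSet`. -/
def starF (w : V) : Finset H.edgeSet :=
  (H.neighborFinset w).attach.image
    (fun q => ⟨s(w, q.1), (H.mem_edgeSet).mpr ((H.mem_neighborFinset w q.1).mp q.2)⟩)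

lemma mem_starF {w : V} {e : H.edgeSet} : e ∈ starF H w ↔ w ∈ (e : Sym2 V) := by
  constructor
  · intro he
    simp only [starF, Finset.mem_image] at he
    obtain ⟨q, _, rfl⟩ := he
    exact Sym2.mem_mk_left _ _
  · intro hwe
    have hspec : s(w, Sym2.Mem.other' hwe) = (e : Sym2 V) := Sym2.other_spec' hwe
    have hadj : H.Adj w (Sym2.Mem.other' hwe) := by
      rw [← H.mem_edgeSet, hspec]; exact e.2
    refine Finset.mem_image.mpr ⟨⟨Sym2.Mem.other' hwe, (H.mem_neighborFinset _ _).mpr hadj⟩,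
      Finset.mem_attach _ _, Subtype.ext hspec⟩

lemma card_starF (w : V) : (starF H w).card = H.degree w := by
  rw [starF, Finset.card_image_of_injective _ ?_, Finset.card_attach]
  · rfl
  · intro q1 q2 h
    have : s(w, q1.1) = s(w, q2.1) := congrArg Subtype.val h
    exact Subtype.ext (Sym2.congr_right.mp this)

lemma facet_iff {F : Finset H.edgeSet} :
    IsFacet (LK H) F ↔ (SimpleGraph.lineGraph H).IsClique (F : Set H.edgeSet) ∧ F.card = 3 := by
  constructor
  · rintro ⟨⟨F', hF', hcard, hsub⟩, hmax⟩
    have hF'K : F' ∈ LK H := ⟨F', hF', hcard, Finset.Subset.refl _⟩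
    have := hmax F' hF'K hsub
    subst this
    exact ⟨hF', hcard⟩
  · rintro ⟨hcl, hcard⟩
    refine ⟨⟨F, hcl, hcard, Finset.Subset.refl _⟩, ?_⟩
    rintro G ⟨F'', _, hcard'', hsub''⟩ hFG
    refine Finset.eq_of_subset_of_card_le hFG ?_
    calc G.card ≤ F''.card := Finset.card_le_card hsub''
    _ = 3 := hcard''
    _ = F.card := hcard.symm

lemma starF_facet {w : V} (hdw : H.degree w = 3) : IsFacet (LK H) (starF H w) := by
  rw [facet_iff]
  constructor
  · intro e he f hf hef
    rw [Finset.mem_coe, mem_starF] at he hf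
    exact ⟨hef, Set.nonempty_of_mem ⟨he, hf⟩⟩
  · rw [card_starF, hdw]

/-- Chains of given length for a relation. -/
inductive RChain {α : Type*} (R : α → α → Prop) : ℕ → α → α → Prop
  | refl (a : α) : RChain R 0 a a
  | cons {a b c : α} {n : ℕ} : R a b → RChain R n b c → RChain R (n+1) a c

lemma RChain.snoc {α : Type*} {R : α → α → Prop} {n : ℕ} {a b c : α}
    (h : RChain R n a b) (hbc : R b c) : RChain R (n+1) a c := by
  induction h with
  | refl a => exact RChain.cons hbc (RChain.refl c)
  | cons hab _ ih => exact RChain.cons hab (ih hbc)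

lemma exists_rchain {α : Type*} {R : α → α → Prop} {a b : α}
    (h : Relation.ReflTransGen R a b) : ∃ n, RChain R n a b := by
  induction h with
  | refl => exact ⟨0, RChain.refl a⟩
  | tail _ hbc ih => obtain ⟨n, hn⟩ := ih; exact ⟨n+1, hn.snoc hbc⟩

lemma facetAdj_cards {F G : Finset H.edgeSet} (h : FacetAdj (LK H) F G) :
    IsFacet (LK H) F ∧ IsFacet (LK H) G ∧ F.card = 3 ∧ G.card = 3 ∧ (F ∩ G).card = 2 ∧ F ≠ G := by
  obtain ⟨hF, hG, h1, h2⟩ := h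
  have hFc : F.card = 3 := ((facet_iff H).mp hF).2
  have hGc : G.card = 3 := ((facet_iff H).mp hG).2
  refine ⟨hF, hG, hFc, hGc, by omega, ?_⟩
  rintro rfl
  rw [Finset.inter_self] at h1; omega

/-- An edge containing `w` is `s(w,u)` for some neighbor `u`. -/
lemma edge_other {w : V} {e : H.edgeSet} (hw : w ∈ (e : Sym2 V)) :
    ∃ u, H.Adj w u ∧ (e : Sym2 V) = s(w, u) := by
  refine ⟨Sym2.Mem.other' hw, ?_, (Sym2.other_spec' hw).symm⟩
  rw [← H.mem_edgeSet, Sym2.other_spec' hw]; exact e.2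

/-- If every edge of a facet contains `p ≠ v`, the facet equals `starF p` and `deg p = 3`. -/
lemma facet_at_vertex {F : Finset H.edgeSet} {p : V} (hF : IsFacet (LK H) F)
    (hall : ∀ e ∈ F, p ∈ (e : Sym2 V)) (hpv : p ≠ v)
    (hdeg : ∀ w : V, w ≠ v → H.degree w ≤ 3) :
    H.degree p = 3 ∧ F = starF H p := by
  have hsub : F ⊆ starF H p := fun e he => (mem_starF H).mpr (hall e he)
  have hFc : F.card = 3 := ((facet_iff H).mp hF).2
  have h3 : 3 ≤ H.degree p := by
    rw [← card_starF, ← hFc]; exact Finset.card_le_card hsub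
  have hd : H.degree p = 3 := le_antisymm (hdeg p hpv) h3
  refine ⟨hd, Finset.eq_of_subset_of_card_le hsub ?_⟩
  rw [card_starF, hd, hFc]

/-- Two distinct elements of a facet. -/
lemma two_mem {F : Finset H.edgeSet} (hF : F.card = 3) :
    ∃ e1 ∈ F, ∃ e2 ∈ F, e1 ≠ e2 := by
  have : 1 < F.card := by omega
  obtain ⟨a, ha, b, hb, hab⟩ := Finset.one_lt_card.mp this
  exact ⟨a, ha, b, hb, hab⟩

lemma dist_adj_le (hconn : H.Connected) (v : V) {a b : V} (hab : H.Adj a b) : H.dist v b ≤ H.dist v a + 1 := by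
  have := hconn.dist_triangle (u := v) (v := a) (w := b)
  rwa [((SimpleGraph.dist_eq_one_iff_adj (G := H))).mpr hab] at this

lemma adj_dist_one (hconn : H.Connected) {v a : V} (h2 : 2 ≤ H.dist v a) {b : V} (hab : H.Adj a b) : b ≠ v := by
  intro hbv
  have h' := dist_adj_le H hconn v hab.symm
  rw [hbv, SimpleGraph.dist_self] at h'
  omega

/-- Four distinct neighbors contradict degree ≤ 3. -/
lemma four_nbrs {v p : V} (hpv : p ≠ v) (hdeg : ∀ w : V, w ≠ v → H.degree w ≤ 3)
    {c1 c2 c3 c4 : V} (h1 : H.Adj p c1) (h2 : H.Adj p c2) (h3 : H.Adj p c3) (h4 : H.Adj p c4)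
    (d12 : c1 ≠ c2) (d13 : c1 ≠ c3) (d14 : c1 ≠ c4) (d23 : c2 ≠ c3) (d24 : c2 ≠ c4)
    (d34 : c3 ≠ c4) : False := by
  have hsub : ({c1, c2, c3, c4} : Finset V) ⊆ H.neighborFinset p := by
    intro y hy
    simp only [Finset.mem_insert, Finset.mem_singleton] at hy
    rcases hy with rfl | rfl | rfl | rfl <;> simp [H.mem_neighborFinset, *]
  have hcard : ({c1, c2, c3, c4} : Finset V).card = 4 := by
    rw [Finset.card_insert_of_notMem (by simp [d12, d13, d14]),
      Finset.card_insert_of_notMem (by simp [d23, d24]),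
      Finset.card_insert_of_notMem (by simp [d34]), Finset.card_singleton]
  have := Finset.card_le_card hsub
  rw [hcard, H.card_neighborFinset_eq_degree] at this
  have := hdeg p hpv
  omega

lemma common_vertex {F : Finset H.edgeSet}
    (hcl : (SimpleGraph.lineGraph H).IsClique (F : Set H.edgeSet)) {a b : H.edgeSet}
    (ha : a ∈ F) (hb : b ∈ F) (hne : a ≠ b) :
    ∃ y, y ∈ (a : Sym2 V) ∧ y ∈ (b : Sym2 V) := by
  have := hcl (Finset.mem_coe.mpr ha) (Finset.mem_coe.mpr hb) hne
  rw [SimpleGraph.lineGraph_adj_iff_exists] at this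
  exact this.2

lemma extra_elt {F S : Finset H.edgeSet} (hS : S ⊆ F) (hF : F.card = 3) (hSc : S.card = 2) :
    ∃ f, f ∈ F ∧ f ∉ S ∧ ∀ e ∈ F, e ∉ S → e = f := by
  have h1 : (F \ S).card = 1 := by rw [Finset.card_sdiff_of_subset hS, hF, hSc]
  obtain ⟨f, hf⟩ := Finset.card_eq_one.mp h1
  have hfm : f ∈ F \ S := by rw [hf]; exact Finset.mem_singleton_self f
  rw [Finset.mem_sdiff] at hfm
  refine ⟨f, hfm.1, hfm.2, ?_⟩
  intro e he heS
  have : e ∈ F \ S := Finset.mem_sdiff.mpr ⟨he, heS⟩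
  rw [hf, Finset.mem_singleton] at this
  exact this

lemma edge_eq {a : H.edgeSet} {x y : V} (hxy : x ≠ y) (hx : x ∈ (a : Sym2 V))
    (hy : y ∈ (a : Sym2 V)) : (a : Sym2 V) = s(x, y) :=
  (Sym2.mem_and_mem_iff hxy).mp ⟨hx, hy⟩

lemma step2 {v : V} {G_v : Finset H.edgeSet} (hGv : ∀ e ∈ G_v, v ∈ (e : Sym2 V))
    {w : V} (hwv : w ≠ v) {F0 : Finset H.edgeSet} (hF0 : IsFacet (LK H) F0)
    (hall : ∀ e : H.edgeSet, e ∈ F0 ↔ w ∈ (e : Sym2 V))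
    {n : ℕ} (ch : RChain (FacetAdj (LK H)) n F0 G_v) :
    ∃ (u z : V), H.Adj w u ∧ H.Adj w z ∧ H.Adj u z ∧
      ∃ (m : ℕ) (F2 : Finset H.edgeSet) (p : V), n = m + 2 ∧
        RChain (FacetAdj (LK H)) m F2 G_v ∧ IsFacet (LK H) F2 ∧
        (∀ e ∈ F2, p ∈ (e : Sym2 V)) ∧ (p = w ∨ p = u ∨ p = z) := by
  cases ch with
  | refl =>
    -- F0 = G_v is impossible
    exfalso
    obtain ⟨e1, he1, e2, he2, hne⟩ := two_mem H ((facet_iff H).mp hF0).2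
    have h1 : (e1 : Sym2 V) = s(w, v) := edge_eq H hwv ((hall e1).mp he1) (hGv e1 he1)
    have h2 : (e2 : Sym2 V) = s(w, v) := edge_eq H hwv ((hall e2).mp he2) (hGv e2 he2)
    exact hne (Subtype.ext (h1.trans h2.symm))
  | @cons _ F1 _ n' hadj ch' =>
    obtain ⟨_, hF1, hF0c, hF1c, hScard, hne01⟩ := facetAdj_cards H hadj
    have hcl1 := ((facet_iff H).mp hF1).1
    -- the two common edges e1, e2
    obtain ⟨e1, e2, hee, hSeq⟩ := Finset.card_eq_two.mp hScard
    have he1S : e1 ∈ F0 ∩ F1 := by rw [hSeq]; simp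
    have he2S : e2 ∈ F0 ∩ F1 := by rw [hSeq]; simp
    have he1F0 : e1 ∈ F0 := (Finset.mem_inter.mp he1S).1
    have he1F1 : e1 ∈ F1 := (Finset.mem_inter.mp he1S).2
    have he2F0 : e2 ∈ F0 := (Finset.mem_inter.mp he2S).1
    have he2F1 : e2 ∈ F1 := (Finset.mem_inter.mp he2S).2
    obtain ⟨u, hwu, he1v⟩ := edge_other H ((hall e1).mp he1F0)
    obtain ⟨z, hwz, he2v⟩ := edge_other H ((hall e2).mp he2F0)
    have huz : u ≠ z := by
      rintro rfl
      exact hee (Subtype.ext (he1v.trans he2v.symm))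
    -- the third edge f of the triangle F1
    obtain ⟨f, hfF1, hfS, hfuniq⟩ := extra_elt H (Finset.inter_subset_right) hF1c (by rw [hSeq]; exact Finset.card_pair hee)
    have hfF0 : f ∉ F0 := fun h => hfS (Finset.mem_inter.mpr ⟨h, hfF1⟩)
    have hwf : w ∉ (f : Sym2 V) := fun h => hfF0 ((hall f).mpr h)
    have hfe1 : f ≠ e1 := fun h => hfF0 (h ▸ he1F0)
    have hfe2 : f ≠ e2 := fun h => hfF0 (h ▸ he2F0)
    have huf : u ∈ (f : Sym2 V) := by
      obtain ⟨y, hyf, hye⟩ := common_vertex H hcl1 hfF1 he1F1 hfe1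
      rw [he1v, Sym2.mem_iff] at hye
      rcases hye with rfl | rfl
      · exact absurd hyf hwf
      · exact hyf
    have hzf : z ∈ (f : Sym2 V) := by
      obtain ⟨y, hyf, hye⟩ := common_vertex H hcl1 hfF1 he2F1 hfe2
      rw [he2v, Sym2.mem_iff] at hye
      rcases hye with rfl | rfl
      · exact absurd hyf hwf
      · exact hyf
    have hfv : (f : Sym2 V) = s(u, z) := edge_eq H huz huf hzf
    have hAuz : H.Adj u z := by rw [← H.mem_edgeSet, ← hfv]; exact f.2
    have hmemF1 : ∀ e ∈ F1, e = f ∨ e = e1 ∨ e = e2 := by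
      intro e he
      by_cases heS : e ∈ F0 ∩ F1
      · rw [hSeq, Finset.mem_insert, Finset.mem_singleton] at heS
        exact Or.inr heS
      · exact Or.inl (hfuniq e he heS)
    refine ⟨u, z, hwu, hwz, hAuz, ?_⟩
    cases ch' with
    | refl =>
      -- F1 = G_v is impossible: v would be in all three triangle edges
      exfalso
      have hv1 := hGv e1 he1F1
      have hv2 := hGv e2 he2F1
      rw [he1v, Sym2.mem_iff] at hv1
      rw [he2v, Sym2.mem_iff] at hv2
      rcases hv1 with h | h
      · exact hwv h.symm
      rcases hv2 with h' | h'
      · exact hwv h'.symm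
      · exact huz (h.symm.trans h')
    | @cons _ F2 _ n'' hadj2 ch'' =>
      obtain ⟨_, hF2, _, hF2c, hTcard, hne12⟩ := facetAdj_cards H hadj2
      have hcl2 := ((facet_iff H).mp hF2).1
      -- the new edge g of F2
      have hT2 : (F2 ∩ F1).card = 2 := by rwa [Finset.inter_comm]
      obtain ⟨g, hgF2, hgT, hguniq⟩ := extra_elt H Finset.inter_subset_left hF2c hT2
      have hgF1 : g ∉ F1 := fun h => hgT (Finset.mem_inter.mpr ⟨hgF2, h⟩)
      have hmemF2 : ∀ e ∈ F2, e ∈ F1 ∨ e = g := by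
        intro e he
        by_cases heF1 : e ∈ F1
        · exact Or.inl heF1
        · exact Or.inr (hguniq e he (fun hh => heF1 (Finset.mem_inter.mp hh).2))
      have hTsub : ∀ e ∈ F1, e ∈ F2 ∨ e ∈ F1 \ F2 := by
        intro e he
        by_cases h : e ∈ F2
        · exact Or.inl h
        · exact Or.inr (Finset.mem_sdiff.mpr ⟨he, h⟩)
      -- the missing edge of F1
      have hT1 : (F1 ∩ F2).card = 2 := hTcard
      obtain ⟨mm, hmmF1, hmmT, hmmuniq⟩ := extra_elt H Finset.inter_subset_left hF1c hT1
      have hmm_notF2 : mm ∉ F2 := fun h => hmmT (Finset.mem_inter.mpr ⟨hmmF1, h⟩)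
      have hinT : ∀ e ∈ F1, e ≠ mm → e ∈ F2 := by
        intro e he hne
        by_contra h
        exact hne (hmmuniq e he (fun hh => h (Finset.mem_inter.mp hh).2))
      have hgne1 : g ≠ e1 := fun h => hgF1 (h ▸ he1F1)
      have hgne2 : g ≠ e2 := fun h => hgF1 (h ▸ he2F1)
      have hgnef : g ≠ f := fun h => hgF1 (h ▸ hfF1)
      rcases hmemF1 mm hmmF1 with rfl | rfl | rfl
      · -- missing edge is f : shared edges are e1, e2, common vertex is w
        have he1F2 : e1 ∈ F2 := hinT e1 he1F1 hfe1.symm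
        have he2F2 : e2 ∈ F2 := hinT e2 he2F1 hfe2.symm
        obtain ⟨y1, hy1g, hy1e⟩ := common_vertex H hcl2 hgF2 he1F2 hgne1
        obtain ⟨y2, hy2g, hy2e⟩ := common_vertex H hcl2 hgF2 he2F2 hgne2
        rw [he1v, Sym2.mem_iff] at hy1e
        rw [he2v, Sym2.mem_iff] at hy2e
        by_cases hwg : w ∈ (g : Sym2 V)
        · refine ⟨n'', F2, w, rfl, ch'', hF2, ?_, Or.inl rfl⟩
          intro e he
          rcases hmemF2 e he with heF1 | rfl
          · rcases hmemF1 e heF1 with rfl | rfl | rfl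
            · exact absurd he hmm_notF2
            · rw [he1v]; exact Sym2.mem_mk_left _ _
            · rw [he2v]; exact Sym2.mem_mk_left _ _
          · exact hwg
        · exfalso
          have hug : u ∈ (g : Sym2 V) := by
            rcases hy1e with rfl | rfl
            · exact absurd hy1g hwg
            · exact hy1g
          have hzg : z ∈ (g : Sym2 V) := by
            rcases hy2e with rfl | rfl
            · exact absurd hy2g hwg
            · exact hy2g
          exact hgnef (Subtype.ext ((edge_eq H huz hug hzg).trans hfv.symm))
      · -- missing edge is e1 : shared edges are f, e2, common vertex is z
        have hfF2 : f ∈ F2 := hinT f hfF1 hfe1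
        have he2F2 : e2 ∈ F2 := hinT e2 he2F1 (fun h => hee (h.symm ▸ rfl))
        obtain ⟨y1, hy1g, hy1e⟩ := common_vertex H hcl2 hgF2 hfF2 hgnef
        obtain ⟨y2, hy2g, hy2e⟩ := common_vertex H hcl2 hgF2 he2F2 hgne2
        rw [hfv, Sym2.mem_iff] at hy1e
        rw [he2v, Sym2.mem_iff] at hy2e
        by_cases hzg : z ∈ (g : Sym2 V)
        · refine ⟨n'', F2, z, rfl, ch'', hF2, ?_, Or.inr (Or.inr rfl)⟩
          intro e he
          rcases hmemF2 e he with heF1 | rfl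
          · rcases hmemF1 e heF1 with rfl | rfl | rfl
            · rw [hfv]; exact Sym2.mem_mk_right _ _
            · exact absurd he hmm_notF2
            · rw [he2v]; exact Sym2.mem_mk_right _ _
          · exact hzg
        · exfalso
          have hug : u ∈ (g : Sym2 V) := by
            rcases hy1e with rfl | rfl
            · exact hy1g
            · exact absurd hy1g hzg
          have hwg : w ∈ (g : Sym2 V) := by
            rcases hy2e with rfl | rfl
            · exact hy2g
            · exact absurd hy2g hzg
          exact hgne1 (Subtype.ext ((edge_eq H hwu.ne hwg hug).trans he1v.symm))
      · -- missing edge is e2 : shared edges are f, e1, common vertex is u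
        have hfF2 : f ∈ F2 := hinT f hfF1 hfe2
        have he1F2 : e1 ∈ F2 := hinT e1 he1F1 hee
        obtain ⟨y1, hy1g, hy1e⟩ := common_vertex H hcl2 hgF2 hfF2 hgnef
        obtain ⟨y2, hy2g, hy2e⟩ := common_vertex H hcl2 hgF2 he1F2 hgne1
        rw [hfv, Sym2.mem_iff] at hy1e
        rw [he1v, Sym2.mem_iff] at hy2e
        by_cases hug : u ∈ (g : Sym2 V)
        · refine ⟨n'', F2, u, rfl, ch'', hF2, ?_, Or.inr (Or.inl rfl)⟩
          intro e he
          rcases hmemF2 e he with heF1 | rfl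
          · rcases hmemF1 e heF1 with rfl | rfl | rfl
            · rw [hfv]; exact Sym2.mem_mk_left _ _
            · rw [he1v]; exact Sym2.mem_mk_right _ _
            · exact absurd he hmm_notF2
          · exact hug
        · exfalso
          have hzg : z ∈ (g : Sym2 V) := by
            rcases hy1e with rfl | rfl
            · exact absurd hy1g hug
            · exact hy1g
          have hwg : w ∈ (g : Sym2 V) := by
            rcases hy2e with rfl | rfl
            · exact hy2g
            · exact absurd hy2g hug
          exact hgne2 (Subtype.ext ((edge_eq H hwz.ne hwg hzg).trans he2v.symm))

lemma main_aux (hconn : H.Connected) (v : V)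
    (hdeg : ∀ w : V, w ≠ v → H.degree w ≤ 3)
    {G_v : Finset H.edgeSet} (hGv : ∀ e ∈ G_v, v ∈ (e : Sym2 V)) :
    ∀ n : ℕ,
    (∀ w : V, H.degree w = 3 → 2 ≤ H.dist v w →
      RChain (FacetAdj (LK H)) n (starF H w) G_v →
      H.dist v w = 2 ∧ ∃ a b : V, H.dist v a = 1 ∧ H.dist v b = 1 ∧ H.Adj a b ∧
        H.Adj w a ∧ H.Adj w b)
    ∧
    (∀ u w z : V, H.neighborFinset u = {v, w, z} → H.dist v w = 2 → H.dist v z = 2 →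
      H.Adj w z → H.degree w = 3 →
      RChain (FacetAdj (LK H)) n (starF H u) G_v → False) := by
  intro n
  induction n using Nat.strong_induction_on with
  | _ n ih =>
  constructor
  · -- MAIN
    intro w hdw hw2 ch
    have hwv : w ≠ v := by
      rintro rfl; rw [SimpleGraph.dist_self] at hw2; omega
    obtain ⟨u, z, hwu, hwz, huz, m, F2, p, hn, ch2, hF2, hallp, hp⟩ :=
      step2 H hGv hwv (starF_facet H hdw) (fun e => mem_starF H) ch
    have hm : m < n := by omega
    have hu_v : u ≠ v := adj_dist_one H hconn hw2 hwu
    have hz_v : z ≠ v := adj_dist_one H hconn hw2 hwz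
    have key : ∀ (u z : V), H.Adj w u → H.Adj w z → H.Adj u z → u ≠ v → z ≠ v →
        (∀ e ∈ F2, u ∈ (e : Sym2 V)) →
        H.dist v w = 2 ∧ ∃ a b : V, H.dist v a = 1 ∧ H.dist v b = 1 ∧ H.Adj a b ∧
          H.Adj w a ∧ H.Adj w b := by
      clear hp hallp hwu hwz huz hu_v hz_v
      intro u z hwu hwz huz huv hzv hallu
      obtain ⟨hdu, hF2eq⟩ := facet_at_vertex H hF2 hallu huv hdeg
      have ch2' : RChain (FacetAdj (LK H)) m (starF H u) G_v := hF2eq ▸ ch2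
      rcases Nat.lt_or_ge (H.dist v u) 2 with hlt | hge
      · -- u is at level 1
        have hdu1 : H.dist v u = 1 := by
          have h0 : H.dist v u ≠ 0 := fun h => huv ((hconn.dist_eq_zero_iff).mp h).symm
          omega
        have hw2' : H.dist v w = 2 := by
          have := dist_adj_le H hconn v hwu.symm
          omega
        rcases Nat.lt_or_ge (H.dist v z) 2 with hzlt | hzge
        · have hdz1 : H.dist v z = 1 := by
            have h0 : H.dist v z ≠ 0 := fun h => hzv ((hconn.dist_eq_zero_iff).mp h).symm
            omega
          exact ⟨hw2', u, z, hdu1, hdz1, huz, hwu, hwz⟩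
        · -- z at level 2 : contradiction via AUX
          exfalso
          have hdz2 : H.dist v z = 2 := by
            have := dist_adj_le H hconn v huz
            omega
          have hNu : H.neighborFinset u = {v, w, z} := by
            have hsub : ({v, w, z} : Finset V) ⊆ H.neighborFinset u := by
              intro y hy
              simp only [Finset.mem_insert, Finset.mem_singleton] at hy
              rcases hy with rfl | rfl | rfl
              · exact (H.mem_neighborFinset u y).mpr (((SimpleGraph.dist_eq_one_iff_adj (G := H)).mp hdu1).symm)
              · exact (H.mem_neighborFinset u y).mpr hwu.symm
              · exact (H.mem_neighborFinset u y).mpr huz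
            have hc3 : ({v, w, z} : Finset V).card = 3 := by
              rw [Finset.card_insert_of_notMem (by
                simp only [Finset.mem_insert, Finset.mem_singleton]
                push_neg
                exact ⟨Ne.symm hwv, Ne.symm hzv⟩), Finset.card_pair hwz.ne]
            exact (Finset.eq_of_subset_of_card_le hsub (by
              rw [H.card_neighborFinset_eq_degree, hdu, hc3])).symm
          exact (ih m hm).2 u w z hNu hw2' hdz2 hwz hdw ch2'
      · -- u at level ≥ 2 : IH gives conclusion for u, contradiction
        exfalso
        obtain ⟨hdu2, a, b, hda, hdb, hab, hua, hub⟩ := (ih m hm).1 u hdu hge ch2'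
        have hav : a ≠ v := fun h => by rw [h, SimpleGraph.dist_self] at hda; omega
        have hbv : b ≠ v := fun h => by rw [h, SimpleGraph.dist_self] at hdb; omega
        have haw : a ≠ w := fun h => by rw [h] at hda; omega
        have hbw : b ≠ w := fun h => by rw [h] at hdb; omega
        have hau : a ≠ u := fun h => by rw [h, hdu2] at hda; omega
        have hbu : b ≠ u := fun h => by rw [h, hdu2] at hdb; omega
        by_cases hza : z = a
        · exact four_nbrs H hav hdeg (((SimpleGraph.dist_eq_one_iff_adj (G := H)).mp hda).symm) hab hua.symm
            ((hza ▸ hwz).symm) (Ne.symm hbv) (Ne.symm huv) (Ne.symm hwv) hbu hbw hwu.ne'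
        · by_cases hzb : z = b
          · exact four_nbrs H hbv hdeg (((SimpleGraph.dist_eq_one_iff_adj (G := H)).mp hdb).symm) hab.symm hub.symm
              ((hzb ▸ hwz).symm) (Ne.symm hav) (Ne.symm huv) (Ne.symm hwv) hau haw hwu.ne'
          · exact four_nbrs H huv hdeg hua hub hwu.symm huz hab.ne haw
              (fun h => hza h.symm) hbw (fun h => hzb h.symm) hwz.ne
    rcases hp with rfl | rfl | rfl
    · -- p = w : recurse on the same w
      obtain ⟨_, hF2eq⟩ := facet_at_vertex H hF2 hallp hwv hdeg
      exact (ih m hm).1 p hdw hw2 (hF2eq ▸ ch2)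
    · exact key p z hwu hwz huz hu_v hz_v hallp
    · exact key p u hwz hwu huz.symm hz_v hu_v hallp
  · -- AUX
    intro u w z hNu hdw2 hdz2 hAwz hdw ch
    have hvw : v ≠ w := fun h => by rw [← h, SimpleGraph.dist_self] at hdw2; omega
    have hvz : v ≠ z := fun h => by rw [← h, SimpleGraph.dist_self] at hdz2; omega
    have hc3 : ({v, w, z} : Finset V).card = 3 := by
      rw [Finset.card_insert_of_notMem (by
        simp only [Finset.mem_insert, Finset.mem_singleton]
        push_neg
        exact ⟨hvw, hvz⟩), Finset.card_pair hAwz.ne]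
    have hdu : H.degree u = 3 := by rw [← H.card_neighborFinset_eq_degree, hNu, hc3]
    have hmemN : ∀ y, H.Adj u y → y = v ∨ y = w ∨ y = z := by
      intro y hy
      have : y ∈ H.neighborFinset u := (H.mem_neighborFinset u y).mpr hy
      rw [hNu] at this
      simpa using this
    have hAuv : H.Adj u v := by
      have : v ∈ H.neighborFinset u := by rw [hNu]; simp
      exact (H.mem_neighborFinset u v).mp this
    have hAuw : H.Adj u w := by
      have : w ∈ H.neighborFinset u := by rw [hNu]; simp
      exact (H.mem_neighborFinset u w).mp this
    have hAuz : H.Adj u z := by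
      have : z ∈ H.neighborFinset u := by rw [hNu]; simp
      exact (H.mem_neighborFinset u z).mp this
    have huv : u ≠ v := hAuv.ne
    obtain ⟨u', z', huu', huz', hu'z', m, F2, p, hn, ch2, hF2, hallp, hp⟩ :=
      step2 H hGv huv (starF_facet H hdu) (fun e => mem_starF H) ch
    have hm : m < n := by omega
    have hnotv : ∀ y y' : V, H.Adj u y → H.Adj u y' → H.Adj y y' → y ≠ v := by
      intro y y' hy hy' hyy' hyv
      subst hyv
      rcases hmemN y' hy' with rfl | rfl | rfl
      · exact H.loopless.irrefl _ hyy'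
      · have := (SimpleGraph.dist_eq_one_iff_adj (G := H)).mpr hyy'
        omega
      · have := (SimpleGraph.dist_eq_one_iff_adj (G := H)).mpr hyy'
        omega
    have hu'v : u' ≠ v := hnotv u' z' huu' huz' hu'z'
    have hz'v : z' ≠ v := hnotv z' u' huz' huu' hu'z'.symm
    have hp' : p = u ∨ p = w ∨ p = z := by
      have hcases : u' = w ∨ u' = z := by
        rcases hmemN u' huu' with rfl | rfl | rfl
        · exact absurd rfl hu'v
        · exact Or.inl rfl
        · exact Or.inr rfl
      have hcases' : z' = w ∨ z' = z := by
        rcases hmemN z' huz' with rfl | rfl | rfl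
        · exact absurd rfl hz'v
        · exact Or.inl rfl
        · exact Or.inr rfl
      rcases hp with rfl | rfl | rfl
      · exact Or.inl rfl
      · rcases hcases with h | h
        · exact Or.inr (Or.inl h)
        · exact Or.inr (Or.inr h)
      · rcases hcases' with h | h
        · exact Or.inr (Or.inl h)
        · exact Or.inr (Or.inr h)
    rcases hp' with rfl | rfl | rfl
    · -- p = u : recurse AUX
      obtain ⟨_, hF2eq⟩ := facet_at_vertex H hF2 hallp huv hdeg
      exact (ih m hm).2 p w z hNu hdw2 hdz2 hAwz hdw (hF2eq ▸ ch2)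
    · -- p = w : conclusion at w gives a contradiction
      obtain ⟨_, hF2eq⟩ := facet_at_vertex H hF2 hallp (Ne.symm hvw) hdeg
      obtain ⟨_, a, b, hda, hdb, hab, hwa, hwb⟩ :=
        (ih m hm).1 p hdw (by omega) (hF2eq ▸ ch2)
      have haz : a ≠ z := fun h => by rw [h, hdz2] at hda; omega
      have hbz : b ≠ z := fun h => by rw [h, hdz2] at hdb; omega
      by_cases hau : a = u
      · have hb : H.Adj u b := hau ▸ hab
        rcases hmemN b hb with rfl | rfl | rfl
        · rw [SimpleGraph.dist_self] at hdb; omega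
        · exact H.loopless.irrefl _ hwb
        · exact hbz rfl
      · by_cases hbu : b = u
        · have ha : H.Adj u a := hbu ▸ hab.symm
          rcases hmemN a ha with rfl | rfl | rfl
          · rw [SimpleGraph.dist_self] at hda; omega
          · exact H.loopless.irrefl _ hwa
          · exact haz rfl
        · exact four_nbrs H (Ne.symm hvw) hdeg hwa hwb hAuw.symm hAwz hab.ne
            hau haz hbu hbz hAuz.ne
    · -- p = z : conclusion at z gives a contradiction
      obtain ⟨hdz3, hF2eq⟩ := facet_at_vertex H hF2 hallp (Ne.symm hvz) hdeg
      obtain ⟨_, a, b, hda, hdb, hab, hza, hzb⟩ :=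
        (ih m hm).1 p hdz3 (by omega) (hF2eq ▸ ch2)
      have haw : a ≠ w := fun h => by rw [h, hdw2] at hda; omega
      have hbw : b ≠ w := fun h => by rw [h, hdw2] at hdb; omega
      by_cases hau : a = u
      · have hb : H.Adj u b := hau ▸ hab
        rcases hmemN b hb with rfl | rfl | rfl
        · rw [SimpleGraph.dist_self] at hdb; omega
        · exact hbw rfl
        · exact H.loopless.irrefl _ hzb
      · by_cases hbu : b = u
        · have ha : H.Adj u a := hbu ▸ hab.symm
          rcases hmemN a ha with rfl | rfl | rfl
          · rw [SimpleGraph.dist_self] at hda; omega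
          · exact haw rfl
          · exact H.loopless.irrefl _ hza
        · exact four_nbrs H (Ne.symm hvz) hdeg hza hzb hAuz.symm hAwz.symm hab.ne
            hau haw hbu hbw hAuw.ne

end Stmt16

theorem stmt16 {V : Type} [DecidableEq V] [Fintype V] (H : SimpleGraph V)
    [DecidableRel H.Adj] (hconn : H.Connected) (v : V) (r : ℕ) (hr : 3 < r)
    (hdegv : H.degree v = r) (hdeg : ∀ w : V, w ≠ v → H.degree w ≤ 3)
    (htri : ∀ w : V, H.degree w = 2 → ∃ a b : V, H.Adj w a ∧ H.Adj w b ∧ H.Adj a b)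
    (hsc : StronglyConnected (pureSkeleton (cliqueComplex (SimpleGraph.lineGraph H)) 2))
    (x : V) (hx : 2 ≤ H.dist v x) (hdx : H.degree x = 3) :
    H.dist v x = 2 ∧ ∃ a b : V, H.dist v a = 1 ∧ H.dist v b = 1 ∧ H.Adj a b ∧
      H.Adj x a ∧ H.Adj x b := by
  have h3 : 3 ≤ (Stmt16.starF H v).card := by rw [Stmt16.card_starF, hdegv]; omega
  obtain ⟨G_v, hsubGv, hGvcard⟩ := Finset.exists_subset_card_eq h3
  have hGv : ∀ e ∈ G_v, v ∈ (e : Sym2 V) := fun e he => (Stmt16.mem_starF H).mp (hsubGv he)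
  have hGvfacet : IsFacet (Stmt16.LK H) G_v := by
    rw [Stmt16.facet_iff]
    refine ⟨?_, hGvcard⟩
    intro e he f hf hef
    rw [Finset.mem_coe] at he hf
    exact ⟨hef, Set.nonempty_of_mem ⟨hGv e he, hGv f hf⟩⟩
  have hxfacet := Stmt16.starF_facet H hdx
  have hrt : Relation.ReflTransGen (FacetAdj (Stmt16.LK H)) (Stmt16.starF H x) G_v :=
    hsc.2 _ _ hxfacet hGvfacet
  obtain ⟨n, ch⟩ := Stmt16.exists_rchain hrt
  exact (Stmt16.main_aux H hconn v hdeg hGv n).1 x hdx hx ch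
end

section
/- Let H be a simple graph with at least one edge in which every vertex has degree at most 3, and let G = L(H). If every connected component of G is a cycle or a path, then Δ(G) is vertex decomposable if and only if it is sequentially Cohen–Macaulay over some field. -/
open Finset SimpleGraph

variable {V : Type*} [DecidableEq V]

/-! ### Auxiliary development -/

section AuxHomology

variable {W : Type} [DecidableEq W] (k : Type) [Field k]

lemma bd_eq_lc (lo : LinearOrder W) (c : Finset W →₀ k) :
    bd k lo c = Finsupp.linearCombination k (bdFace k lo) c := by
  rw [Finsupp.linearCombination_apply]; rfl

lemma bd_single (lo : LinearOrder W) (F : Finset W) (a : k) :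
    bd k lo (Finsupp.single F a) = a • bdFace k lo F := by
  rw [bd_eq_lc, Finsupp.linearCombination_single]

/-- The cone map on a single face. -/
noncomputable def coneF (lo : LinearOrder W) (v : W) (F : Finset W) : Finset W →₀ k :=
  letI := lo
  if v ∈ F then 0 else
    ((-1 : k) ^ ((F.filter (fun w => w < v)).card)) • Finsupp.single (insert v F) 1

lemma cone_bd (lo : LinearOrder W) (v : W) (F : Finset W) :
    bd k lo (coneF k lo v F)
      + Finsupp.linearCombination k (coneF k lo v) (bdFace k lo F)
      = Finsupp.single F 1 := by
  letI := lo
  classical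
  have hLCbdF : Finsupp.linearCombination k (coneF k lo v) (bdFace k lo F)
      = ∑ u ∈ F, ((-1 : k) ^ ((F.filter (fun w => w < u)).card))
          • coneF k lo v (F.erase u) := by
    rw [bdFace]
    rw [map_sum]
    refine Finset.sum_congr rfl fun u hu => ?_
    rw [map_smul, Finsupp.linearCombination_single, one_smul]
  by_cases hvF : v ∈ F
  · have h1 : coneF k lo v F = 0 := by rw [coneF]; simp [hvF]
    rw [h1, bd_eq_lc, map_zero, zero_add, hLCbdF]
    rw [Finset.sum_eq_single v]
    · have hvnot : v ∉ F.erase v := Finset.notMem_erase v F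
      rw [coneF, if_neg hvnot, Finset.insert_erase hvF]
      have hfe : (F.erase v).filter (fun w => w < v) = F.filter (fun w => w < v) := by
        rw [Finset.filter_erase]
        exact Finset.erase_eq_of_notMem (by simp)
      rw [hfe, smul_smul, ← pow_add, ← two_mul, pow_mul]
      norm_num
    · intro u hu hne
      have : v ∈ F.erase u := Finset.mem_erase.2 ⟨Ne.symm hne, hvF⟩
      rw [coneF, if_pos this, smul_zero]
    · intro h; exact absurd hvF h
  · -- v ∉ F
    have h1 : coneF k lo v F
        = ((-1 : k) ^ ((F.filter (fun w => w < v)).card)) • Finsupp.single (insert v F) 1 := by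
      rw [coneF, if_neg hvF]
    set m : ℕ := (F.filter (fun w => w < v)).card with hm
    rw [h1, bd_eq_lc, map_smul, Finsupp.linearCombination_single, one_smul]
    rw [bdFace, Finset.sum_insert hvF]
    have hterm_v : ((insert v F).filter (fun w => w < v)).card = m := by
      rw [Finset.filter_insert, if_neg (lt_irrefl v)]
    rw [hterm_v, Finset.erase_insert hvF, smul_add, smul_smul, ← pow_add, ← two_mul, pow_mul]
    norm_num
    rw [hLCbdF, Finset.smul_sum, add_assoc, ← Finset.sum_add_distrib]
    rw [add_eq_left]
    refine Finset.sum_eq_zero fun u hu => ?_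
    have huv : u ≠ v := fun h => hvF (h ▸ hu)
    set mu : ℕ := (F.filter (fun w => w < u)).card with hmu
    set mu' : ℕ := ((F.erase u).filter (fun w => w < v)).card with hmu'
    -- first summand
    have hfi : ((insert v F).filter (fun w => w < u)).card = mu + (if v < u then 1 else 0) := by
      rw [Finset.filter_insert]
      by_cases h : v < u
      · rw [if_pos h, if_pos h, Finset.card_insert_of_notMem (by simp [hvF])]
      · rw [if_neg h, if_neg h, add_zero]
    have hei : (insert v F).erase u = insert v (F.erase u) :=
      Finset.erase_insert_of_ne (Ne.symm huv)
    have hcone : coneF k lo v (F.erase u)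
        = ((-1 : k) ^ mu') • Finsupp.single (insert v (F.erase u)) 1 := by
      rw [coneF, if_neg (fun h => hvF (Finset.mem_of_mem_erase h))]
    have hmsum : mu' + (if u < v then 1 else 0) = m := by
      rw [hmu', Finset.filter_erase]
      by_cases h : u < v
      · rw [if_pos h]
        exact Finset.card_erase_add_one (Finset.mem_filter.2 ⟨hu, h⟩)
      · rw [if_neg h, add_zero, Finset.erase_eq_of_notMem (by simp [h])]
    have hiff : (if v < u then 1 else 0) + (if u < v then 1 else 0) = 1 := by
      rcases lt_or_gt_of_ne huv with h | h
      · rw [if_neg (asymm h), if_pos h]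
      · rw [if_pos h, if_neg (asymm h)]
    rw [hfi, hei, hcone]
    simp only [Finsupp.smul_single, smul_eq_mul, mul_one]
    rw [← Finsupp.single_add]
    have hexp : m + (mu + if v < u then 1 else 0) = (mu + mu') + 1 := by omega
    have hz : ((-1 : k) ^ m * (-1 : k) ^ (mu + if v < u then 1 else 0))
        + (-1 : k) ^ mu * (-1 : k) ^ mu' = 0 := by
      rw [← pow_add, ← pow_add, hexp, pow_succ]
      ring
    rw [hz, Finsupp.single_zero]


lemma coneF_support (lo : LinearOrder W) (v : W) (F F' : Finset W)
    (h : F' ∈ (coneF k lo v F).support) : v ∉ F ∧ F' = insert v F := by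
  letI := lo
  rw [coneF] at h
  by_cases hv : v ∈ F
  · rw [if_pos hv] at h; simp at h
  · rw [if_neg hv] at h
    refine ⟨hv, ?_⟩
    have := Finsupp.support_smul h
    simpa using Finset.mem_singleton.1 (Finsupp.support_single_subset this)

lemma homologyVanishes_of_cone (K : Set (Finset W)) (v : W)
    (hc : ∀ F ∈ K, insert v F ∈ K) (j : ℕ) : HomologyVanishes k K j := by
  intro lo c hsupp hbd
  refine ⟨Finsupp.linearCombination k (coneF k lo v) c, ?_, ?_⟩
  · intro F' hF'
    rw [Finsupp.linearCombination_apply] at hF'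
    obtain ⟨F, hF, hF'2⟩ := Finset.mem_biUnion.1 (Finsupp.support_sum hF')
    have hF'3 := Finsupp.support_smul hF'2
    obtain ⟨hv, rfl⟩ := coneF_support k lo v F _ hF'3
    obtain ⟨hFK, hFc⟩ := hsupp F hF
    exact ⟨hc F hFK, by rw [Finset.card_insert_of_notMem hv, hFc]⟩
  · have key : ∀ F : Finset W, bd k lo (coneF k lo v F)
        = Finsupp.single F 1
          - Finsupp.linearCombination k (coneF k lo v) (bdFace k lo F) :=
      fun F => eq_sub_of_add_eq (cone_bd k lo v F)
    rw [Finsupp.linearCombination_apply]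
    have h1 : bd k lo (c.sum fun F a => a • coneF k lo v F)
        = c.sum fun F a => a • bd k lo (coneF k lo v F) := by
      rw [bd_eq_lc, map_finsuppSum]
      exact Finsupp.sum_congr fun F _ => by rw [map_smul, ← bd_eq_lc]
    rw [h1]
    have h2 : (c.sum fun F a => a • bd k lo (coneF k lo v F))
        = (c.sum fun F a => Finsupp.single F a)
          - c.sum fun F a =>
              a • Finsupp.linearCombination k (coneF k lo v) (bdFace k lo F) := by
      rw [← Finsupp.sum_sub]
      refine Finsupp.sum_congr fun F _ => ?_
      rw [key, smul_sub, Finsupp.smul_single, smul_eq_mul, mul_one]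
    rw [h2, Finsupp.sum_single]
    have h3 : (c.sum fun F a =>
        a • Finsupp.linearCombination k (coneF k lo v) (bdFace k lo F))
        = Finsupp.linearCombination k (coneF k lo v) (bd k lo c) := by
      have : bd k lo c = c.sum fun F a => a • bdFace k lo F := rfl
      rw [this, map_finsuppSum]
      exact Finsupp.sum_congr fun F _ => by rw [map_smul]
    rw [h3, hbd, map_zero, sub_zero]

lemma bdFace_singleton (lo : LinearOrder W) (x : W) :
    bdFace k lo ({x} : Finset W) = Finsupp.single ∅ 1 := by
  letI := lo
  rw [bdFace, Finset.sum_singleton]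
  have h1 : ({x} : Finset W).filter (fun w => w < x) = ∅ := by
    rw [Finset.filter_singleton, if_neg (lt_irrefl x)]
  rw [h1, Finset.erase_singleton]
  simp

lemma bd_zero (lo : LinearOrder W) : bd k lo (0 : Finset W →₀ k) = 0 := by
  rw [bd_eq_lc, map_zero]

lemma bd_add (lo : LinearOrder W) (c d : Finset W →₀ k) :
    bd k lo (c + d) = bd k lo c + bd k lo d := by
  rw [bd_eq_lc, bd_eq_lc, bd_eq_lc, map_add]

lemma bd_smul (lo : LinearOrder W) (a : k) (c : Finset W →₀ k) :
    bd k lo (a • c) = a • bd k lo c := by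
  rw [bd_eq_lc, bd_eq_lc, map_smul]

lemma bd_sub (lo : LinearOrder W) (c d : Finset W →₀ k) :
    bd k lo (c - d) = bd k lo c - bd k lo d := by
  rw [bd_eq_lc, bd_eq_lc, bd_eq_lc, map_sub]

lemma homologyVanishes_zero (K : Set (Finset W)) (x : W) (hx : ({x} : Finset W) ∈ K) :
    HomologyVanishes k K 0 := by
  intro lo c hsupp hbd
  refine ⟨(c ∅) • Finsupp.single {x} 1, ?_, ?_⟩
  · intro F hF
    have h := Finsupp.support_single_subset (Finsupp.support_smul hF)
    rw [Finset.mem_singleton] at h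
    subst h
    exact ⟨hx, Finset.card_singleton x⟩
  · have hc : c = Finsupp.single ∅ (c ∅) := by
      ext F
      by_cases hF : F = ∅
      · subst hF; simp
      · have hns : F ∉ c.support := fun h =>
          hF (Finset.card_eq_zero.1 (hsupp F h).2)
        rw [Finsupp.notMem_support_iff.1 hns, Finsupp.single_apply,
          if_neg (fun h => hF h.symm)]
    rw [bd_smul, bd_single, one_smul, bdFace_singleton, Finsupp.smul_single,
      smul_eq_mul, mul_one]
    exact hc.symm


lemma erase_pair_left {a b : W} (hab : a ≠ b) : ({a, b} : Finset W).erase a = {b} := by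
  rw [show ({a,b} : Finset W) = insert a {b} from rfl,
    Finset.erase_insert (by simp [hab])]

lemma erase_pair_right {a b : W} (hab : a ≠ b) : ({a, b} : Finset W).erase b = {a} := by
  rw [show ({a,b} : Finset W) = insert a {b} from rfl,
    Finset.erase_insert_of_ne hab, Finset.erase_singleton]
  rfl

lemma bdFace_pair (lo : LinearOrder W) {a b : W} (hab : a ≠ b) :
    bdFace k lo ({a, b} : Finset W)
      = Finsupp.single {b} 1 - Finsupp.single {a} 1
      ∨ bdFace k lo ({a, b} : Finset W)
      = Finsupp.single {a} 1 - Finsupp.single {b} 1 := by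
  letI := lo
  rw [bdFace, Finset.sum_pair hab, erase_pair_left hab, erase_pair_right hab]
  have hfa : ({a, b} : Finset W).filter (fun w => w < a)
      = if b < a then {b} else ∅ := by
    rw [show ({a,b} : Finset W) = insert a {b} from rfl, Finset.filter_insert,
      if_neg (lt_irrefl a), Finset.filter_singleton]
  have hfb : ({a, b} : Finset W).filter (fun w => w < b)
      = if a < b then {a} else ∅ := by
    rw [show ({a,b} : Finset W) = insert a {b} from rfl, Finset.filter_insert,
      Finset.filter_singleton, if_neg (lt_irrefl b)]
    by_cases h : a < b <;> simp [h]
  rcases lt_or_gt_of_ne hab with h | h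
  · left
    rw [hfa, hfb, if_neg (asymm h), if_pos h]
    simp [sub_eq_add_neg]
  · right
    rw [hfa, hfb, if_pos h, if_neg (asymm h)]
    simp [sub_eq_add_neg, add_comm]

lemma bd_pair (lo : LinearOrder W) {a b : W} (hab : a ≠ b) :
    ∃ s : k, bd k lo (s • Finsupp.single ({a, b} : Finset W) 1)
      = Finsupp.single {a} 1 - Finsupp.single {b} 1 := by
  rcases bdFace_pair k lo hab with h | h
  · exact ⟨-1, by rw [bd_smul, bd_single, one_smul, h]; simp⟩
  · exact ⟨1, by rw [bd_smul, bd_single, one_smul, h, one_smul]⟩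

lemma chain_of_conn (K : Set (Finset W)) (lo : LinearOrder W)
    {R : W → W → Prop} (hR : ∀ x y, R x y → x ≠ y ∧ ({x, y} : Finset W) ∈ K)
    {u w : W} (h : Relation.ReflTransGen R u w) :
    ∃ d : Finset W →₀ k, (∀ F ∈ d.support, F ∈ K ∧ F.card = 2) ∧
      bd k lo d = Finsupp.single {u} 1 - Finsupp.single {w} 1 := by
  induction h with
  | refl => exact ⟨0, by simp, by rw [bd_zero, sub_self]⟩
  | @tail b c _ hbc ih =>
    obtain ⟨d1, hd1, hbd1⟩ := ih
    obtain ⟨hne, hmem⟩ := hR b c hbc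
    obtain ⟨s, hs⟩ := bd_pair k lo hne
    refine ⟨d1 + s • Finsupp.single ({b, c} : Finset W) 1, ?_, ?_⟩
    · intro F hF
      rcases Finset.mem_union.1 (Finsupp.support_add hF) with h | h
      · exact hd1 F h
      · have h2 := Finsupp.support_single_subset (Finsupp.support_smul h)
        rw [Finset.mem_singleton] at h2
        subst h2
        exact ⟨hmem, Finset.card_pair hne⟩
    · rw [bd_add, hbd1, hs]
      abel

lemma sum_coeff_eq_zero (lo : LinearOrder W) (c : Finset W →₀ k)
    (hsupp : ∀ F ∈ c.support, F.card = 1) (hbd : bd k lo c = 0) :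
    ∑ F ∈ c.support, c F = 0 := by
  have h : (bd k lo c) ∅ = ∑ F ∈ c.support, c F := by
    have : bd k lo c = c.sum fun F a => a • bdFace k lo F := rfl
    rw [this, Finsupp.sum, Finset.sum_apply']
    refine Finset.sum_congr rfl fun F hF => ?_
    obtain ⟨x, rfl⟩ := Finset.card_eq_one.1 (hsupp F hF)
    rw [Finsupp.smul_apply, bdFace_singleton, Finsupp.single_apply, if_pos rfl,
      smul_eq_mul, mul_one]
  rw [hbd] at h
  simpa using h.symm

lemma homologyVanishes_one (K : Set (Finset W)) {R : W → W → Prop}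
    (hR : ∀ x y, R x y → x ≠ y ∧ ({x, y} : Finset W) ∈ K)
    (hconn : ∀ x y : W, ({x} : Finset W) ∈ K → ({y} : Finset W) ∈ K →
      Relation.ReflTransGen R x y) :
    HomologyVanishes k K 1 := by
  intro lo c hsupp hbd
  generalize hn : c.support.card = n
  induction n using Nat.strong_induction_on generalizing c with
  | _ n ih =>
    by_cases hc0 : c = 0
    · exact ⟨0, by simp, by rw [bd_zero, hc0]⟩
    obtain ⟨F₀, hF₀⟩ := Finsupp.support_nonempty_iff.2 hc0
    have hsum := sum_coeff_eq_zero k lo c (fun F hF => (hsupp F hF).2) hbd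
    have hF₁ : ∃ F₁ ∈ c.support, F₁ ≠ F₀ := by
      by_contra hno
      push_neg at hno
      have : c.support = {F₀} := Finset.eq_singleton_iff_unique_mem.2 ⟨hF₀, hno⟩
      rw [this, Finset.sum_singleton] at hsum
      exact (Finsupp.mem_support_iff.1 hF₀) hsum
    obtain ⟨F₁, hF₁s, hF₁ne⟩ := hF₁
    obtain ⟨u, rfl⟩ := Finset.card_eq_one.1 (hsupp F₀ hF₀).2
    obtain ⟨w, rfl⟩ := Finset.card_eq_one.1 (hsupp F₁ hF₁s).2
    obtain ⟨d₂, hd₂s, hd₂⟩ := chain_of_conn k K lo hR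
      (hconn u w (hsupp _ hF₀).1 (hsupp _ hF₁s).1)
    set a₀ : k := c {u} with ha₀
    set c' : Finset W →₀ k :=
      c - a₀ • (Finsupp.single {u} 1 - Finsupp.single {w} 1) with hc'
    have hc'u : c' {u} = 0 := by
      rw [hc']
      simp [Finsupp.single_apply, (Finset.singleton_injective.ne_iff).2,
        hF₁ne.symm, Finsupp.single_eq_of_ne (fun h =>
          hF₁ne (h.symm : ({u} : Finset W) = {w}).symm)]
      exact sub_eq_zero.2 ha₀.symm
    have hbd' : bd k lo c' = 0 := by
      rw [hc', bd_sub, bd_smul, bd_sub, bd_single, bd_single, one_smul, one_smul,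
        bdFace_singleton, bdFace_singleton, sub_self, smul_zero, hbd, sub_zero]
    have hsupp' : ∀ F ∈ c'.support, F ∈ K ∧ F.card = 1 := by
      intro F hF
      by_cases h1 : F = {u}
      · exact h1 ▸ ⟨(hsupp _ hF₀).1, Finset.card_singleton u⟩
      by_cases h2 : F = {w}
      · exact h2 ▸ ⟨(hsupp _ hF₁s).1, Finset.card_singleton w⟩
      have : F ∈ c.support := by
        rw [Finsupp.mem_support_iff] at hF ⊢
        intro h0
        apply hF
        rw [hc']
        simp [Finsupp.single_apply, h0, Ne.symm h1, Ne.symm h2,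
          Finsupp.single_eq_of_ne (Ne.symm h1), Finsupp.single_eq_of_ne (Ne.symm h2)]
      exact hsupp F this
    have hss : c'.support ⊆ c.support.erase {u} := by
      intro F hF
      rw [Finset.mem_erase]
      have hne : F ≠ {u} := by
        rintro rfl
        exact Finsupp.mem_support_iff.1 hF hc'u
      refine ⟨hne, ?_⟩
      by_cases h2 : F = {w}
      · exact h2 ▸ hF₁s
      rw [Finsupp.mem_support_iff] at hF ⊢
      intro h0
      apply hF
      rw [hc']
      simp [Finsupp.single_apply, h0, Ne.symm hne, Ne.symm h2,
        Finsupp.single_eq_of_ne (Ne.symm hne), Finsupp.single_eq_of_ne (Ne.symm h2)]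
    have hlt : c'.support.card < n := by
      calc c'.support.card ≤ (c.support.erase {u}).card := Finset.card_le_card hss
        _ < c.support.card := Finset.card_erase_lt_of_mem hF₀
        _ = n := hn
    obtain ⟨d', hd's, hbdd'⟩ := ih _ hlt c' hsupp' hbd' rfl
    refine ⟨d' + a₀ • d₂, ?_, ?_⟩
    · intro F hF
      rcases Finset.mem_union.1 (Finsupp.support_add hF) with h | h
      · exact hd's F h
      · exact hd₂s F (Finsupp.support_smul h)
    · rw [bd_add, bd_smul, hbdd', hd₂, hc']
      abel


lemma no_boundary_of_disconn (K : Set (Finset W)) (lo : LinearOrder W)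
    (conn : W → Prop) {u w : W} (hu : conn u) (hw : ¬ conn w)
    (hedge : ∀ F ∈ K, F.card = 2 → ∀ x ∈ F, ∀ y ∈ F, (conn x ↔ conn y))
    (d : Finset W →₀ k) (hd : ∀ F ∈ d.support, F ∈ K ∧ F.card = 2) :
    bd k lo d ≠ Finsupp.single {u} 1 - Finsupp.single {w} 1 := by
  classical
  intro h
  set wt : Finset W → k := fun F => if ∃ x ∈ F, conn x then 1 else 0 with hwt
  have hwt1 : ∀ x : W, wt {x} = if conn x then 1 else 0 := by
    intro x
    by_cases hx : conn x <;> simp [hwt, hx]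
  set φ := Finsupp.linearCombination k wt with hφ
  have h1 : φ (Finsupp.single ({u} : Finset W) 1 - Finsupp.single {w} 1) = 1 := by
    rw [hφ, map_sub, Finsupp.linearCombination_single, Finsupp.linearCombination_single,
      one_smul, one_smul, hwt1, hwt1, if_pos hu, if_neg hw, sub_zero]
  have h2 : φ (bd k lo d) = 0 := by
    have hb : bd k lo d = d.sum fun F a => a • bdFace k lo F := rfl
    rw [hb, map_finsuppSum, Finsupp.sum]
    refine Finset.sum_eq_zero fun F hF => ?_
    rw [map_smul]
    obtain ⟨hFK, hF2⟩ := hd F hF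
    obtain ⟨a, b, hab, rfl⟩ := Finset.card_eq_two.1 hF2
    have hconn : conn a ↔ conn b :=
      hedge _ hFK hF2 a (by simp) b (by simp)
    have hwteq : wt {a} = wt {b} := by
      rw [hwt1, hwt1]
      by_cases hca : conn a
      · rw [if_pos hca, if_pos (hconn.1 hca)]
      · rw [if_neg hca, if_neg (fun hcb => hca (hconn.2 hcb))]
    have : φ (bdFace k lo ({a, b} : Finset W)) = 0 := by
      rcases bdFace_pair k lo hab with hp | hp <;>
        rw [hφ, hp, map_sub, Finsupp.linearCombination_single,
          Finsupp.linearCombination_single, one_smul, one_smul, hwteq, sub_self]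
    rw [this, smul_zero]
  rw [h, h1] at h2
  exact one_ne_zero h2

end AuxHomology



section AuxVD

variable {W : Type} [DecidableEq W]

/-- Edge relation of a complex. -/
def EdgeRel (K : Set (Finset W)) (x y : W) : Prop :=
  x ≠ y ∧ ({x, y} : Finset W) ∈ K

lemma isComplex_link {K : Set (Finset W)} (hK : IsComplex K) (v : W)
    (hv : ({v} : Finset W) ∈ K) : IsComplex (link K v) := by
  constructor
  · exact ⟨Finset.notMem_empty v, by simpa using hv⟩
  · rintro F ⟨hvF, hF⟩ G hGF
    exact ⟨fun h => hvF (hGF h), hK.2 _ hF _ (Finset.insert_subset_insert v hGF)⟩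

lemma isComplex_del {K : Set (Finset W)} (hK : IsComplex K) (v : W) :
    IsComplex (del K v) := by
  constructor
  · exact ⟨hK.1, Finset.notMem_empty v⟩
  · rintro F ⟨hF, hvF⟩ G hGF
    exact ⟨hK.2 _ hF _ hGF, fun h => hvF (hGF h)⟩

lemma not_facet_grows {K : Set (Finset W)} {F : Finset W} (hF : F ∈ K)
    (hnf : ¬ IsFacet K F) : ∃ G ∈ K, F ⊆ G ∧ ∃ y ∈ G, y ∉ F := by
  rw [IsFacet] at hnf
  push_neg at hnf
  obtain ⟨G, hG, hsub, hne⟩ := hnf hF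
  refine ⟨G, hG, hsub, ?_⟩
  by_contra hno
  push_neg at hno
  exact hne (Finset.Subset.antisymm hsub hno)

lemma vd_conn {K : Set (Finset W)} (h : VertexDecomposable K) :
    IsComplex K → ∀ u w : W, (∃ a, a ≠ u ∧ ({u, a} : Finset W) ∈ K) →
      (∃ b, b ≠ w ∧ ({w, b} : Finset W) ∈ K) →
      Relation.ReflTransGen (EdgeRel K) u w := by
  induction h with
  | simplex K hS =>
    rintro hK u w ⟨a, hau, hua⟩ ⟨b, hbw, hwb⟩
    obtain ⟨F, rfl⟩ := hS
    have hu : u ∈ F := hua (Finset.mem_insert_self u {a})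
    have hw : w ∈ F := hwb (Finset.mem_insert_self w {b})
    by_cases huw : u = w
    · exact huw ▸ Relation.ReflTransGen.refl
    · exact Relation.ReflTransGen.single
        ⟨huw, Finset.insert_subset hu (Finset.singleton_subset_iff.2 hw)⟩
  | shed K v hshed hlink hdel ihlink ihdel =>
    intro hK u w hu hw
    have hdelC : IsComplex (del K v) := isComplex_del hK v
    -- every non-isolated vertex other than v is non-isolated in the deletion
    have star : ∀ x : W, x ≠ v → (∃ a, a ≠ x ∧ ({x, a} : Finset W) ∈ K) →
        ∃ a, a ≠ x ∧ ({x, a} : Finset W) ∈ del K v := by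
      rintro x hxv ⟨a, hax, hxa⟩
      by_cases hav : a = v
      · rw [hav] at hax hxa
        have hxlink : ({x} : Finset W) ∈ link K v := by
          refine ⟨by simp [Ne.symm hxv], ?_⟩
          have : insert v ({x} : Finset W) = {x, v} := by
            rw [Finset.pair_comm]
          rw [this]; exact hxa
        have hxdel : ({x} : Finset W) ∈ del K v :=
          ⟨hK.2 _ hxa _ (by simp), by simp [Ne.symm hxv]⟩
        obtain ⟨G, hG, hsub, y, hyG, hyx⟩ :=
          not_facet_grows hxdel (hshed.2 _ hxlink)
        rw [Finset.mem_singleton] at hyx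
        refine ⟨y, hyx, ?_⟩
        exact hdelC.2 _ hG _ (Finset.insert_subset (hsub (by simp))
          (Finset.singleton_subset_iff.2 hyG))
      · refine ⟨a, hax, hxa, ?_⟩
        intro hvmem
        rcases Finset.mem_insert.1 hvmem with h | h
        · exact hxv h.symm
        · exact hav (Finset.mem_singleton.1 h).symm
    have lift : ∀ p q : W, Relation.ReflTransGen (EdgeRel (del K v)) p q →
        Relation.ReflTransGen (EdgeRel K) p q :=
      fun p q hpq => Relation.ReflTransGen.mono (fun x y hxy => ⟨hxy.1, hxy.2.1⟩) _ _ hpq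
    by_cases huv : u = v <;> by_cases hwv : w = v
    · rw [huv, hwv]
    · -- u = v, w ≠ v
      subst huv
      obtain ⟨a, hau, hua⟩ := hu
      have hav : a ≠ u := hau
      have ha' : ∃ c, c ≠ a ∧ ({a, c} : Finset W) ∈ K :=
        ⟨u, fun hh => hau hh.symm, by rw [Finset.pair_comm]; exact hua⟩
      have hpath := ihdel hdelC a w (star a hau ha') (star w hwv hw)
      exact Relation.ReflTransGen.head ⟨fun hh => hau hh.symm, hua⟩ (lift _ _ hpath)
    · -- u ≠ v, w = v
      subst hwv
      obtain ⟨b, hbw, hwb⟩ := hw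
      have hb' : ∃ c, c ≠ b ∧ ({b, c} : Finset W) ∈ K :=
        ⟨w, fun hh => hbw hh.symm, by rw [Finset.pair_comm]; exact hwb⟩
      have hpath := ihdel hdelC u b (star u huv hu) (star b hbw hb')
      exact Relation.ReflTransGen.tail (lift _ _ hpath)
        ⟨hbw, by rw [Finset.pair_comm]; exact hwb⟩
    · exact lift _ _ (ihdel hdelC u w (star u huv hu) (star w hwv hw))

end AuxVD


section AuxGraph

variable {W : Type} [DecidableEq W] (G : SimpleGraph W)

/-- The clique complex restricted to an allowed vertex set. -/
def KC (A : Finset W) : Set (Finset W) := {F | G.IsClique (F : Set W) ∧ F ⊆ A}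

/-- Adjacency within an allowed set. -/
def AdjOn (A : Finset W) (x y : W) : Prop := x ∈ A ∧ y ∈ A ∧ G.Adj x y

lemma adjOn_symm {A : Finset W} {x y : W} (h : AdjOn G A x y) : AdjOn G A y x :=
  ⟨h.2.1, h.1, h.2.2.symm⟩

lemma connOn_symm {A : Finset W} {x y : W}
    (h : Relation.ReflTransGen (AdjOn G A) x y) :
    Relation.ReflTransGen (AdjOn G A) y x := by
  induction h with
  | refl => exact Relation.ReflTransGen.refl
  | tail _ hbc ih => exact Relation.ReflTransGen.head (adjOn_symm G hbc) ih

lemma isComplex_KC (A : Finset W) : IsComplex (KC G A) := by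
  constructor
  · exact ⟨by simp, Finset.empty_subset A⟩
  · rintro F ⟨hcl, hFA⟩ F' hF'
    exact ⟨hcl.subset (Finset.coe_subset.2 hF'), hF'.trans hFA⟩

lemma singleton_mem_KC {A : Finset W} {x : W} : ({x} : Finset W) ∈ KC G A ↔ x ∈ A := by
  constructor
  · rintro ⟨-, h⟩; exact h (by simp)
  · intro h; exact ⟨by simp, by simp [h]⟩

lemma pair_mem_KC {A : Finset W} {x y : W} (hxy : x ≠ y) :
    ({x, y} : Finset W) ∈ KC G A ↔ x ∈ A ∧ y ∈ A ∧ G.Adj x y := by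
  constructor
  · rintro ⟨hcl, hsub⟩
    exact ⟨hsub (by simp), hsub (by simp), hcl (by simp) (by simp) hxy⟩
  · rintro ⟨hx, hy, hadj⟩
    refine ⟨?_, Finset.insert_subset hx (Finset.singleton_subset_iff.2 hy)⟩
    rw [Finset.coe_insert, Finset.coe_singleton]
    exact SimpleGraph.isClique_pair.2 (fun _ => hadj)

lemma del_KC (A : Finset W) (v : W) : del (KC G A) v = KC G (A.erase v) := by
  ext F
  constructor
  · rintro ⟨⟨hcl, hFA⟩, hvF⟩
    exact ⟨hcl, Finset.subset_erase.2 ⟨hFA, hvF⟩⟩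
  · rintro ⟨hcl, hFA⟩
    obtain ⟨h1, h2⟩ := Finset.subset_erase.1 hFA
    exact ⟨⟨hcl, h1⟩, h2⟩

lemma link_KC {A B : Finset W} {v : W} (hv : v ∈ A)
    (hB : ∀ x, x ∈ B ↔ x ∈ A ∧ x ≠ v ∧ G.Adj v x) :
    link (KC G A) v = KC G B := by
  ext F
  constructor
  · rintro ⟨hvF, ⟨hcl, hsub⟩⟩
    rw [Finset.coe_insert] at hcl
    refine ⟨hcl.subset (Set.subset_insert v _), fun x hx => ?_⟩
    have hxv : x ≠ v := fun h => hvF (h ▸ hx)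
    refine (hB x).2 ⟨hsub (Finset.mem_insert_of_mem hx), hxv, ?_⟩
    exact hcl (Set.mem_insert v _) (Set.mem_insert_of_mem _ hx) (Ne.symm hxv)
  · rintro ⟨hcl, hsub⟩
    have hvF : v ∉ F := fun h => ((hB v).1 (hsub h)).2.1 rfl
    refine ⟨hvF, ?_, ?_⟩
    · rw [Finset.coe_insert]
      exact hcl.insert (fun b hb hne => ((hB b).1 (hsub hb)).2.2)
    · intro x hx
      rcases Finset.mem_insert.1 hx with h | h
      · exact h ▸ hv
      · exact ((hB x).1 (hsub h)).1

lemma KC_eq_powerset {A : Finset W} (hA : G.IsClique (A : Set W)) :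
    KC G A = {F | F ⊆ A} := by
  ext F
  exact ⟨fun h => h.2, fun h => ⟨hA.subset (Finset.coe_subset.2 h), h⟩⟩

end AuxGraph


section AuxGraph2

variable {W : Type} [DecidableEq W] (G : SimpleGraph W)

lemma conn_erase_of_isolated {A : Finset W} {v : W}
    (hv : ∀ y ∈ A, ¬ G.Adj v y) {p q : W}
    (h : Relation.ReflTransGen (AdjOn G A) p q) :
    Relation.ReflTransGen (AdjOn G (A.erase v)) p q := by
  induction h with
  | refl => exact Relation.ReflTransGen.refl
  | @tail b c _ hbc ih =>
    have hbv : b ≠ v := fun h => hv c hbc.2.1 (h ▸ hbc.2.2)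
    have hcv : c ≠ v := fun h => hv b hbc.1 ((h ▸ hbc.2.2).symm)
    exact ih.tail ⟨Finset.mem_erase.2 ⟨hbv, hbc.1⟩,
      Finset.mem_erase.2 ⟨hcv, hbc.2.1⟩, hbc.2.2⟩

lemma conn_erase_of_deg_one {A : Finset W} {v u : W}
    (hv : ∀ y ∈ A, G.Adj v y → y = u) {p q : W}
    (h : Relation.ReflTransGen (AdjOn G A) p q) (hp : p ≠ v) :
    (q ≠ v → Relation.ReflTransGen (AdjOn G (A.erase v)) p q)
      ∧ (q = v → Relation.ReflTransGen (AdjOn G (A.erase v)) p u) := by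
  induction h with
  | refl => exact ⟨fun _ => Relation.ReflTransGen.refl, fun h => absurd h hp⟩
  | @tail b c _ hbc ih =>
    constructor
    · intro hcv
      by_cases hbv : b = v
      · have hcu : c = u := hv c hbc.2.1 (hbv ▸ hbc.2.2)
        exact hcu ▸ ih.2 hbv
      · exact (ih.1 hbv).tail ⟨Finset.mem_erase.2 ⟨hbv, hbc.1⟩,
          Finset.mem_erase.2 ⟨hcv, hbc.2.1⟩, hbc.2.2⟩
    · intro hcv
      have hbv : b ≠ v := by
        rintro rfl
        exact G.loopless.irrefl b (hcv ▸ hbc.2.2)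
      have hbu : b = u := hv b hbc.1 ((hcv ▸ hbc.2.2).symm)
      exact hbu ▸ ih.1 hbv

lemma conn_erase_of_deg_two {A : Finset W} {v a b : W}
    (hv : ∀ y ∈ A, G.Adj v y → y = a ∨ y = b)
    (hab : Relation.ReflTransGen (AdjOn G (A.erase v)) a b) {p q : W}
    (h : Relation.ReflTransGen (AdjOn G A) p q) (hp : p ≠ v) :
    (q ≠ v → Relation.ReflTransGen (AdjOn G (A.erase v)) p q)
      ∧ (q = v → Relation.ReflTransGen (AdjOn G (A.erase v)) p a
          ∧ Relation.ReflTransGen (AdjOn G (A.erase v)) p b) := by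
  induction h with
  | refl => exact ⟨fun _ => Relation.ReflTransGen.refl, fun h => absurd h hp⟩
  | @tail b' c _ hbc ih =>
    constructor
    · intro hcv
      by_cases hbv : b' = v
      · rcases hv c hbc.2.1 (hbv ▸ hbc.2.2) with h | h
        · exact h ▸ (ih.2 hbv).1
        · exact h ▸ (ih.2 hbv).2
      · exact (ih.1 hbv).tail ⟨Finset.mem_erase.2 ⟨hbv, hbc.1⟩,
          Finset.mem_erase.2 ⟨hcv, hbc.2.1⟩, hbc.2.2⟩
    · intro hcv
      have hbv : b' ≠ v := by
        rintro rfl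
        exact G.loopless.irrefl b' (hcv ▸ hbc.2.2)
      have hb' := ih.1 hbv
      rcases hv b' hbc.1 ((hcv ▸ hbc.2.2).symm) with h | h
      · exact ⟨h ▸ hb', (h ▸ hb').trans hab⟩
      · exact ⟨(h ▸ hb').trans (connOn_symm G hab), h ▸ hb'⟩

lemma exists_conn_of_all_deg_two
    (hdeg3 : ∀ x y z t : W, G.Adj x y → G.Adj x z → G.Adj x t →
      (y = z ∨ y = t ∨ z = t))
    {A : Finset W} {v a b : W}
    (hall2 : ∀ x ∈ A, ∃ y ∈ A, ∃ z ∈ A, y ≠ z ∧ G.Adj x y ∧ G.Adj x z)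
    (ha : a ∈ A) (hb : b ∈ A) (hav : G.Adj v a) (hbv : G.Adj v b)
    (hab : a ≠ b) (hnadj : ¬ G.Adj a b) :
    Relation.ReflTransGen (AdjOn G (A.erase v)) a b := by
  classical
  by_contra hno
  set A' := A.erase v with hA'
  set C : Finset W := A'.filter
    (fun x => Relation.ReflTransGen (AdjOn G A') a x) with hC
  have haA' : a ∈ A' := Finset.mem_erase.2 ⟨(G.ne_of_adj hav).symm, ha⟩
  have haC : a ∈ C := Finset.mem_filter.2 ⟨haA', Relation.ReflTransGen.refl⟩
  have hbC : b ∉ C := fun h => hno (Finset.mem_filter.1 h).2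
  have hclosed : ∀ x ∈ C, ∀ y ∈ A', G.Adj x y → y ∈ C := by
    intro x hx y hy hadj
    obtain ⟨hxA', hconn⟩ := Finset.mem_filter.1 hx
    exact Finset.mem_filter.2 ⟨hy, hconn.tail ⟨hxA', hy, hadj⟩⟩
  have hnbr : ∀ x ∈ A, ∃ y ∈ A, ∃ z ∈ A, y ≠ z ∧ G.Adj x y ∧ G.Adj x z ∧
      (∀ w, G.Adj x w → w = y ∨ w = z) := by
    intro x hx
    obtain ⟨y, hy, z, hz, hyz, hxy, hxz⟩ := hall2 x hx
    refine ⟨y, hy, z, hz, hyz, hxy, hxz, fun w hw => ?_⟩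
    rcases hdeg3 x y z w hxy hxz hw with h | h | h
    · exact absurd h hyz
    · exact Or.inl h.symm
    · exact Or.inr h.symm
  have hcard2 : ∀ x ∈ C, x ≠ a → (C.filter (G.Adj x)).card = 2 := by
    intro x hxC hxa
    have hxA : x ∈ A := Finset.mem_of_mem_erase (Finset.mem_filter.1 hxC).1
    obtain ⟨y, hy, z, hz, hyz, hxy, hxz, hmax⟩ := hnbr x hxA
    have hxv : ¬ G.Adj x v := by
      intro hxv
      rcases hdeg3 v a b x hav hbv hxv.symm with h | h | h
      · exact hab h
      · exact hxa h.symm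
      · exact hbC (h ▸ hxC)
    have hyv : y ≠ v := fun h => hxv (h ▸ hxy)
    have hzv : z ≠ v := fun h => hxv (h ▸ hxz)
    have hyC : y ∈ C := hclosed x hxC y (Finset.mem_erase.2 ⟨hyv, hy⟩) hxy
    have hzC : z ∈ C := hclosed x hxC z (Finset.mem_erase.2 ⟨hzv, hz⟩) hxz
    have : C.filter (G.Adj x) = {y, z} := by
      apply Finset.Subset.antisymm
      · intro w hw
        obtain ⟨hwC, hadj⟩ := Finset.mem_filter.1 hw
        rcases hmax w hadj with h | h <;> simp [h]
      · intro w hw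
        rcases Finset.mem_insert.1 hw with h | h
        · exact Finset.mem_filter.2 ⟨h ▸ hyC, h ▸ hxy⟩
        · rw [Finset.mem_singleton] at h
          exact Finset.mem_filter.2 ⟨h ▸ hzC, h ▸ hxz⟩
    rw [this, Finset.card_pair hyz]
  have hcard1 : (C.filter (G.Adj a)).card = 1 := by
    obtain ⟨y, hy, z, hz, hyz, hay, haz, hmax⟩ := hnbr a ha
    have hvyz : v = y ∨ v = z := hmax v hav.symm
    obtain ⟨s, hsA, hsv, hsadj, hmax'⟩ :
        ∃ s, s ∈ A ∧ s ≠ v ∧ G.Adj a s ∧ ∀ w, G.Adj a w → w = v ∨ w = s := by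
      rcases hvyz with h | h
      · subst h
        exact ⟨z, hz, fun hh => hyz hh.symm, haz, fun w hw => hmax w hw⟩
      · subst h
        exact ⟨y, hy, fun hh => hyz hh, hay, fun w hw => (hmax w hw).symm⟩
    have hsb : s ≠ b := fun h => hnadj (h ▸ hsadj)
    have hsC : s ∈ C := hclosed a haC s (Finset.mem_erase.2 ⟨hsv, hsA⟩) hsadj
    have : C.filter (G.Adj a) = {s} := by
      apply Finset.Subset.antisymm
      · intro w hw
        obtain ⟨hwC, hadj⟩ := Finset.mem_filter.1 hw
        rcases hmax' w hadj with h | h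
        · exact absurd ((Finset.mem_erase.1 (Finset.mem_filter.1 hwC).1).1) (by simp [h])
        · simp [h]
      · intro w hw
        rw [Finset.mem_singleton] at hw
        exact Finset.mem_filter.2 ⟨hw ▸ hsC, hw ▸ hsadj⟩
    rw [this, Finset.card_singleton]
  -- parity contradiction
  have hS0 : ∑ x ∈ C, ((C.filter (G.Adj x)).card : ZMod 2) = 0 := by
    have h1 : ∀ x ∈ C, ((C.filter (G.Adj x)).card : ZMod 2)
        = ∑ y ∈ C, (if G.Adj x y then (1 : ZMod 2) else 0) := by
      intro x _
      exact (Finset.sum_boole _ _).symm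
    rw [Finset.sum_congr rfl h1, ← Finset.sum_product']
    refine Finset.sum_involution (fun p _ => p.swap) ?_ ?_ ?_ ?_
    · intro p _
      simp only [Prod.fst_swap, Prod.snd_swap]
      have hiff : G.Adj p.2 p.1 ↔ G.Adj p.1 p.2 :=
        ⟨SimpleGraph.Adj.symm, SimpleGraph.Adj.symm⟩
      rw [if_congr hiff rfl rfl]
      split_ifs
      · decide
      · rw [add_zero]
    · intro p _ hf
      have hadj : G.Adj p.1 p.2 := by
        by_contra h
        rw [if_neg h] at hf
        exact hf rfl
      intro hswap
      have h12 : p.2 = p.1 := by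
        have := congrArg Prod.fst hswap
        simpa using this
      exact G.loopless.irrefl p.1 (h12 ▸ hadj)
    · intro p hp
      rw [Finset.mem_product] at hp ⊢
      exact ⟨hp.2, hp.1⟩
    · intro p _
      rfl
  have hS1 : ∑ x ∈ C, ((C.filter (G.Adj x)).card : ZMod 2) = 1 := by
    have h1 : ∀ x ∈ C, ((C.filter (G.Adj x)).card : ZMod 2)
        = if x = a then 1 else 0 := by
      intro x hx
      by_cases hxa : x = a
      · rw [if_pos hxa, hxa, hcard1]; norm_num
      · rw [if_neg hxa, hcard2 x hx hxa]; decide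
    rw [Finset.sum_congr rfl h1, Finset.sum_ite_eq' C a (fun _ => (1 : ZMod 2)),
      if_pos haC]
  rw [hS0] at hS1
  exact one_ne_zero hS1.symm

end AuxGraph2


section AuxVDCon

variable {W : Type} [DecidableEq W] (G : SimpleGraph W)

lemma vd_simplex_KC {A : Finset W} (hA : G.IsClique (A : Set W)) :
    VertexDecomposable (KC G A) :=
  VertexDecomposable.simplex _ ⟨A, KC_eq_powerset G hA⟩

theorem vd_KC
    (hdeg3 : ∀ x y z t : W, G.Adj x y → G.Adj x z → G.Adj x t →
      (y = z ∨ y = t ∨ z = t)) :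
    ∀ (n : ℕ) (A : Finset W), A.card = n →
    (∀ u ∈ A, ∀ w ∈ A, (∃ a ∈ A, G.Adj u a) → (∃ b ∈ A, G.Adj w b) →
      Relation.ReflTransGen (AdjOn G A) u w) →
    VertexDecomposable (KC G A) := by
  intro n
  induction n using Nat.strong_induction_on with
  | _ n ih =>
  intro A hcard hconn
  classical
  by_cases hA0 : A = ∅
  · subst hA0
    exact vd_simplex_KC G (by simp)
  by_cases hiso : ∃ v ∈ A, ∀ y ∈ A, ¬ G.Adj v y
  · obtain ⟨v, hv, hvy⟩ := hiso
    by_cases hA1 : A = {v}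
    · subst hA1
      exact vd_simplex_KC G (by simp)
    -- v is isolated in A, A has other elements : shed v
    obtain ⟨u, hu, huv⟩ : ∃ u ∈ A, u ≠ v := by
      by_contra hno
      push_neg at hno
      exact hA1 (Finset.eq_singleton_iff_unique_mem.2 ⟨hv, hno⟩)
    have hlink : link (KC G A) v = KC G ∅ := by
      refine link_KC G hv fun x => ?_
      simp only [Finset.notMem_empty, false_iff]
      rintro ⟨hxA, -, hadj⟩
      exact hvy x hxA hadj
    have hdel : del (KC G A) v = KC G (A.erase v) := del_KC G A v
    refine VertexDecomposable.shed _ v ⟨(singleton_mem_KC G).2 hv, ?_⟩ ?_ ?_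
    · intro F hF
      rw [hlink] at hF
      have hF0 : F = ∅ := Finset.subset_empty.1 hF.2
      subst hF0
      rw [hdel]
      rintro ⟨-, hmax⟩
      have : (∅ : Finset W) = {u} :=
        hmax {u} ((singleton_mem_KC G).2 (Finset.mem_erase.2 ⟨huv, hu⟩))
          (Finset.empty_subset _)
      exact (Finset.singleton_ne_empty u) this.symm
    · rw [hlink]
      exact vd_simplex_KC G (by simp)
    · rw [hdel]
      refine ih (A.erase v).card ?_ _ rfl ?_
      · rw [← hcard]
        exact Finset.card_erase_lt_of_mem hv
      · intro p hp q hq hep heq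
        have hpA := Finset.mem_of_mem_erase hp
        have hqA := Finset.mem_of_mem_erase hq
        obtain ⟨x, hx, hpx⟩ := hep
        obtain ⟨y, hy, hqy⟩ := heq
        have h := hconn p hpA q hqA ⟨x, Finset.mem_of_mem_erase hx, hpx⟩
          ⟨y, Finset.mem_of_mem_erase hy, hqy⟩
        exact conn_erase_of_isolated G hvy h
  -- no isolated vertices
  push_neg at hiso
  by_cases hone : ∃ v ∈ A, ∃ u ∈ A, G.Adj v u ∧ ∀ y ∈ A, G.Adj v y → y = u
  · obtain ⟨v, hv, u, huA, hadj, hu⟩ := hone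
    have hvu : v ≠ u := G.ne_of_adj hadj
    by_cases hu2 : ∃ x ∈ A, x ≠ v ∧ G.Adj u x
    · -- shed the endpoint v
      obtain ⟨x, hxA, hxv, hux⟩ := hu2
      have hlink : link (KC G A) v = KC G {u} := by
        refine link_KC G hv fun y => ?_
        simp only [Finset.mem_singleton]
        constructor
        · rintro rfl
          exact ⟨huA, Ne.symm hvu, hadj⟩
        · rintro ⟨hyA, -, hady⟩
          exact hu y hyA hady
      have hdel : del (KC G A) v = KC G (A.erase v) := del_KC G A v
      have hvconn : ∀ y ∈ A, G.Adj v y → y = u := hu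
      refine VertexDecomposable.shed _ v ⟨(singleton_mem_KC G).2 hv, ?_⟩ ?_ ?_
      · intro F hF
        rw [hlink] at hF
        rcases Finset.subset_singleton_iff.1 hF.2 with rfl | rfl
        · rw [hdel]
          rintro ⟨-, hmax⟩
          have : (∅ : Finset W) = {u} :=
            hmax {u} ((singleton_mem_KC G).2 (Finset.mem_erase.2 ⟨Ne.symm hvu, huA⟩))
              (Finset.empty_subset _)
          exact (Finset.singleton_ne_empty u) this.symm
        · rw [hdel]
          rintro ⟨-, hmax⟩
          have hux_ne : u ≠ x := G.ne_of_adj hux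
          have hpair : ({u, x} : Finset W) ∈ KC G (A.erase v) :=
            (pair_mem_KC G hux_ne).2 ⟨Finset.mem_erase.2 ⟨Ne.symm hvu, huA⟩,
              Finset.mem_erase.2 ⟨hxv, hxA⟩, hux⟩
          have heq : ({u} : Finset W) = {u, x} :=
            hmax _ hpair (Finset.singleton_subset_iff.2 (Finset.mem_insert_self u {x}))
          have : x ∈ ({u} : Finset W) := heq ▸ (Finset.mem_insert_of_mem (Finset.mem_singleton_self x))
          exact hux_ne (Finset.mem_singleton.1 this).symm
      · rw [hlink]
        exact vd_simplex_KC G (by simp)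
      · rw [hdel]
        refine ih (A.erase v).card ?_ _ rfl ?_
        · rw [← hcard]
          exact Finset.card_erase_lt_of_mem hv
        · intro p hp q hq hep heq
          have hpA := Finset.mem_of_mem_erase hp
          have hqA := Finset.mem_of_mem_erase hq
          obtain ⟨x', hx', hpx⟩ := hep
          obtain ⟨y', hy', hqy⟩ := heq
          have h := hconn p hpA q hqA ⟨x', Finset.mem_of_mem_erase hx', hpx⟩
            ⟨y', Finset.mem_of_mem_erase hy', hqy⟩
          exact (conn_erase_of_deg_one G hvconn h (Finset.mem_erase.1 hp).1).1
            (Finset.mem_erase.1 hq).1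
    · -- A = {v, u} : a single edge
      push_neg at hu2
      have huonly : ∀ y ∈ A, G.Adj u y → y = v := by
        intro y hy hady
        by_contra hyv
        exact hu2 y hy hyv hady
      have hsub : ∀ w ∈ A, w ∈ ({v, u} : Finset W) := by
        have hstep : ∀ p q : W, Relation.ReflTransGen (AdjOn G A) p q →
            p ∈ ({v, u} : Finset W) → q ∈ ({v, u} : Finset W) := by
          intro p q h
          induction h with
          | refl => exact id
          | @tail b c _ hbc ihh =>
            intro hp
            rcases Finset.mem_insert.1 (ihh hp) with hbv | hbu
            · have : c = u := hu c hbc.2.1 (hbv ▸ hbc.2.2)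
              simp [this]
            · rw [Finset.mem_singleton] at hbu
              have : c = v := huonly c hbc.2.1 (hbu ▸ hbc.2.2)
              simp [this]
        intro w hw
        exact hstep v w (hconn v hv w hw ⟨u, huA, hadj⟩ (hiso w hw))
          (Finset.mem_insert_self v {u})
      have hAeq : A = {v, u} :=
        Finset.Subset.antisymm hsub
          (Finset.insert_subset hv (Finset.singleton_subset_iff.2 huA))
      rw [hAeq]
      refine vd_simplex_KC G ?_
      rw [Finset.coe_insert, Finset.coe_singleton]
      exact SimpleGraph.isClique_pair.2 (fun _ => hadj)
  · -- every vertex of A has at least two neighbors in A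
    push_neg at hone
    have hall2 : ∀ x ∈ A, ∃ y ∈ A, ∃ z ∈ A, y ≠ z ∧ G.Adj x y ∧ G.Adj x z := by
      intro x hx
      obtain ⟨y, hy, hxy⟩ := hiso x hx
      obtain ⟨z, hz, hxz, hzy⟩ := hone x hx y hy hxy
      exact ⟨z, hz, y, hy, hzy, hxz, hxy⟩
    obtain ⟨v, hv⟩ : ∃ v, v ∈ A := Finset.nonempty_iff_ne_empty.2 hA0
    obtain ⟨a, ha, b, hb, hneq, hva, hvb⟩ := hall2 v hv
    have hv2 : ∀ y ∈ A, G.Adj v y → y = a ∨ y = b := by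
      intro y hy hvy
      rcases hdeg3 v a b y hva hvb hvy with h | h | h
      · exact absurd h hneq
      · exact Or.inl h.symm
      · exact Or.inr h.symm
    have hav : a ≠ v := (G.ne_of_adj hva).symm
    have hbv : b ≠ v := (G.ne_of_adj hvb).symm
    by_cases hadj_ab : G.Adj a b
    · -- triangle : A = {v, a, b}
      have ha2 : ∀ y ∈ A, G.Adj a y → y = v ∨ y = b := by
        intro y hy hay
        rcases hdeg3 a v b y hva.symm hadj_ab hay with h | h | h
        · exact absurd h.symm hbv
        · exact Or.inl h.symm
        · exact Or.inr h.symm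
      have hb2 : ∀ y ∈ A, G.Adj b y → y = v ∨ y = a := by
        intro y hy hby
        rcases hdeg3 b v a y hvb.symm hadj_ab.symm hby with h | h | h
        · exact absurd h.symm hav
        · exact Or.inl h.symm
        · exact Or.inr h.symm
      have hsub : ∀ w ∈ A, w ∈ ({v, a, b} : Finset W) := by
        have hstep : ∀ p q : W, Relation.ReflTransGen (AdjOn G A) p q →
            p ∈ ({v, a, b} : Finset W) → q ∈ ({v, a, b} : Finset W) := by
          intro p q h
          induction h with
          | refl => exact id
          | @tail x c _ hbc ihh =>
            intro hp
            rcases Finset.mem_insert.1 (ihh hp) with hxv | hxab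
            · rcases hv2 c hbc.2.1 (hxv ▸ hbc.2.2) with h | h <;> simp [h]
            · rcases Finset.mem_insert.1 hxab with hxa | hxb
              · rcases ha2 c hbc.2.1 (hxa ▸ hbc.2.2) with h | h <;> simp [h]
              · rw [Finset.mem_singleton] at hxb
                rcases hb2 c hbc.2.1 (hxb ▸ hbc.2.2) with h | h <;> simp [h]
        intro w hw
        exact hstep v w (hconn v hv w hw ⟨a, ha, hva⟩ (hiso w hw))
          (Finset.mem_insert_self v _)
      have hAeq : A = {v, a, b} :=
        Finset.Subset.antisymm hsub
          (Finset.insert_subset hv (Finset.insert_subset ha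
            (Finset.singleton_subset_iff.2 hb)))
      rw [hAeq]
      refine vd_simplex_KC G ?_
      intro x hx y hy hxy
      simp only [Finset.coe_insert, Finset.coe_singleton, Set.mem_insert_iff,
        Set.mem_singleton_iff] at hx hy
      rcases hx with rfl | rfl | rfl <;> rcases hy with rfl | rfl | rfl
      · exact absurd rfl hxy
      · exact hva
      · exact hvb
      · exact hva.symm
      · exact absurd rfl hxy
      · exact hadj_ab
      · exact hvb.symm
      · exact hadj_ab.symm
      · exact absurd rfl hxy
    · -- shed v; its two neighbors are non-adjacent
      have hsecond : ∀ x ∈ A, ∃ s ∈ A, s ≠ v ∧ G.Adj x s := by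
        intro x hx
        obtain ⟨y, hy, z, hz, hyz, hxy, hxz⟩ := hall2 x hx
        by_cases hyv : y = v
        · exact ⟨z, hz, fun h => hyz (hyv.trans h.symm), hxz⟩
        · exact ⟨y, hy, hyv, hxy⟩
      have hlink : link (KC G A) v = KC G {a, b} := by
        refine link_KC G hv fun y => ?_
        constructor
        · intro hy
          rcases Finset.mem_insert.1 hy with rfl | hy
          · exact ⟨ha, hav, hva⟩
          · rw [Finset.mem_singleton] at hy
            subst hy
            exact ⟨hb, hbv, hvb⟩
        · rintro ⟨hyA, -, hady⟩
          rcases hv2 y hyA hady with h | h <;> simp [h]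
      have hdel : del (KC G A) v = KC G (A.erase v) := del_KC G A v
      have hconnab : Relation.ReflTransGen (AdjOn G (A.erase v)) a b :=
        exists_conn_of_all_deg_two G hdeg3 hall2 ha hb hva hvb hneq hadj_ab
      have hA3 : 3 ≤ A.card := by
        have : ({v, a, b} : Finset W) ⊆ A :=
          Finset.insert_subset hv (Finset.insert_subset ha
            (Finset.singleton_subset_iff.2 hb))
        calc 3 = ({v, a, b} : Finset W).card := by
              rw [Finset.card_insert_of_notMem (by simp [Ne.symm hav, Ne.symm hbv]),
                Finset.card_pair hneq]
          _ ≤ A.card := Finset.card_le_card this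
      refine VertexDecomposable.shed _ v ⟨(singleton_mem_KC G).2 hv, ?_⟩ ?_ ?_
      · intro F hF
        rw [hlink] at hF
        obtain ⟨hFcl, hFsub⟩ := hF
        rw [hdel]
        -- F is ∅, {a} or {b}
        have hFcases : F = ∅ ∨ F = {a} ∨ F = {b} := by
          by_cases haf : a ∈ F <;> by_cases hbf : b ∈ F
          · exfalso
            exact hadj_ab (hFcl haf hbf hneq)
          · refine Or.inr (Or.inl ?_)
            apply Finset.Subset.antisymm
            · intro y hy
              rcases Finset.mem_insert.1 (hFsub hy) with rfl | hy2
              · exact Finset.mem_singleton_self y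
              · rw [Finset.mem_singleton] at hy2
                exact absurd (hy2 ▸ hy) hbf
            · exact Finset.singleton_subset_iff.2 haf
          · refine Or.inr (Or.inr ?_)
            apply Finset.Subset.antisymm
            · intro y hy
              rcases Finset.mem_insert.1 (hFsub hy) with rfl | hy2
              · exact absurd hy haf
              · exact hy2
            · exact Finset.singleton_subset_iff.2 hbf
          · refine Or.inl (Finset.eq_empty_of_forall_notMem fun y hy => ?_)
            rcases Finset.mem_insert.1 (hFsub hy) with rfl | hy2
            · exact haf hy
            · rw [Finset.mem_singleton] at hy2
              exact hbf (hy2 ▸ hy)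
        have hgrow : ∀ x ∈ A, x ≠ v → ¬ IsFacet (KC G (A.erase v)) {x} := by
          intro x hxA hxv
          rintro ⟨-, hmax⟩
          obtain ⟨s, hsA, hsv, hxs⟩ := hsecond x hxA
          have hxs_ne : x ≠ s := G.ne_of_adj hxs
          have hpair : ({x, s} : Finset W) ∈ KC G (A.erase v) :=
            (pair_mem_KC G hxs_ne).2 ⟨Finset.mem_erase.2 ⟨hxv, hxA⟩,
              Finset.mem_erase.2 ⟨hsv, hsA⟩, hxs⟩
          have heq : ({x} : Finset W) = {x, s} :=
            hmax _ hpair (Finset.singleton_subset_iff.2 (Finset.mem_insert_self x {s}))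
          have : s ∈ ({x} : Finset W) :=
            heq ▸ (Finset.mem_insert_of_mem (Finset.mem_singleton_self s))
          exact hxs_ne (Finset.mem_singleton.1 this).symm
        rcases hFcases with rfl | rfl | rfl
        · rintro ⟨-, hmax⟩
          have : (∅ : Finset W) = {a} :=
            hmax {a} ((singleton_mem_KC G).2 (Finset.mem_erase.2 ⟨hav, ha⟩))
              (Finset.empty_subset _)
          exact (Finset.singleton_ne_empty a) this.symm
        · exact hgrow a ha hav
        · exact hgrow b hb hbv
      · rw [hlink]
        refine ih 2 ?_ _ (Finset.card_pair hneq) ?_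
        · omega
        · intro p hp q hq hep heq
          exfalso
          obtain ⟨x, hx, hpx⟩ := hep
          have hpab : p = a ∨ p = b := by
            rcases Finset.mem_insert.1 hp with h | h
            · exact Or.inl h
            · exact Or.inr (Finset.mem_singleton.1 h)
          have hxab : x = a ∨ x = b := by
            rcases Finset.mem_insert.1 hx with h | h
            · exact Or.inl h
            · exact Or.inr (Finset.mem_singleton.1 h)
          rcases hpab with h1 | h1 <;> rcases hxab with h2 | h2 <;>
            rw [h1, h2] at hpx
          · exact G.loopless.irrefl a hpx
          · exact hadj_ab hpx
          · exact hadj_ab hpx.symm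
          · exact G.loopless.irrefl b hpx
      · rw [hdel]
        refine ih (A.erase v).card ?_ _ rfl ?_
        · rw [← hcard]
          exact Finset.card_erase_lt_of_mem hv
        · intro p hp q hq hep heq
          have hpA := Finset.mem_of_mem_erase hp
          have hqA := Finset.mem_of_mem_erase hq
          obtain ⟨x', hx', hpx⟩ := hep
          obtain ⟨y', hy', hqy⟩ := heq
          have h := hconn p hpA q hqA ⟨x', Finset.mem_of_mem_erase hx', hpx⟩
            ⟨y', Finset.mem_of_mem_erase hy', hqy⟩
          exact (conn_erase_of_deg_two G hv2 hconnab h (Finset.mem_erase.1 hp).1).1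
            (Finset.mem_erase.1 hq).1

end AuxVDCon


section AuxSCM

variable {W : Type} [DecidableEq W] (G : SimpleGraph W)

lemma rtg_symm {α : Type*} {R : α → α → Prop} (hsym : ∀ x y, R x y → R y x)
    {p q : α} (h : Relation.ReflTransGen R p q) : Relation.ReflTransGen R q p := by
  induction h with
  | refl => exact Relation.ReflTransGen.refl
  | tail _ hbc ih => exact Relation.ReflTransGen.head (hsym _ _ hbc) ih

lemma linkFace_empty (K : Set (Finset W)) : linkFace K ∅ = K := by
  ext F
  simp [linkFace]

lemma pureSkeleton_closed (K : Set (Finset W)) (i : ℕ) {F F' : Finset W}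
    (h : F ∈ pureSkeleton K i) (h' : F' ⊆ F) : F' ∈ pureSkeleton K i := by
  obtain ⟨T, hT, hTc, hFT⟩ := h
  exact ⟨T, hT, hTc, h'.trans hFT⟩

lemma mem_cliqueComplex {F : Finset W} :
    F ∈ cliqueComplex G ↔ G.IsClique (F : Set W) := Iff.rfl

lemma clique_card_le
    (hdeg3 : ∀ x y z t : W, G.Adj x y → G.Adj x z → G.Adj x t →
      (y = z ∨ y = t ∨ z = t)) {F : Finset W} (hF : G.IsClique (F : Set W)) :
    F.card ≤ 3 := by
  by_contra h
  push_neg at h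
  obtain ⟨x, hx⟩ := Finset.card_pos.1 (show 0 < F.card by omega)
  have h3 : 2 < (F.erase x).card := by
    have := Finset.card_erase_add_one hx
    omega
  obtain ⟨y, z, t, hy, hz, ht, hyz, hyt, hzt⟩ := Finset.two_lt_card_iff.1 h3
  have hxy : G.Adj x y := hF (Finset.mem_coe.2 hx)
    (Finset.mem_coe.2 (Finset.mem_of_mem_erase hy)) (Ne.symm (Finset.mem_erase.1 hy).1)
  have hxz : G.Adj x z := hF (Finset.mem_coe.2 hx)
    (Finset.mem_coe.2 (Finset.mem_of_mem_erase hz)) (Ne.symm (Finset.mem_erase.1 hz).1)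
  have hxt : G.Adj x t := hF (Finset.mem_coe.2 hx)
    (Finset.mem_coe.2 (Finset.mem_of_mem_erase ht)) (Ne.symm (Finset.mem_erase.1 ht).1)
  rcases hdeg3 x y z t hxy hxz hxt with h' | h' | h'
  · exact hyz h'
  · exact hyt h'
  · exact hzt h'

theorem scm_of_conn (k : Type) [Field k]
    (hdeg3 : ∀ x y z t : W, G.Adj x y → G.Adj x z → G.Adj x t →
      (y = z ∨ y = t ∨ z = t))
    (hconn : ∀ u w : W, (∃ a, G.Adj u a) → (∃ b, G.Adj w b) →
      Relation.ReflTransGen G.Adj u w) :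
    IsSeqCMover k (cliqueComplex G) := by
  classical
  intro i F hF j hj
  set K := cliqueComplex G with hKdef
  obtain ⟨T, hTK, hTc, hFT⟩ := hF
  obtain ⟨Gg, hGg, hjG⟩ := hj
  obtain ⟨hdis, hun⟩ := hGg
  obtain ⟨T', hT'K, hT'c, hunT'⟩ := hun
  have hcardT : T.card ≤ 3 := clique_card_le G hdeg3 hTK
  have hi3 : i + 1 ≤ 3 := hTc ▸ hcardT
  have hcardsum : F.card + Gg.card = (F ∪ Gg).card :=
    (Finset.card_union_of_disjoint hdis).symm
  have hcardun : (F ∪ Gg).card ≤ i + 1 := by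
    calc (F ∪ Gg).card ≤ T'.card := Finset.card_le_card hunT'
      _ = i + 1 := hT'c
  have hGgmem : Gg ∈ pureSkeleton K i :=
    ⟨T', hT'K, hT'c, (Finset.subset_union_right).trans hunT'⟩
  have hile : i ≤ 2 := by omega
  interval_cases i
  · -- i = 0
    have hF0 : F = ∅ := Finset.card_eq_zero.1 (by omega)
    have hj0 : j = 0 := by omega
    obtain ⟨x, hxG⟩ := Finset.card_pos.1 (show 0 < Gg.card by omega)
    subst hF0 hj0
    rw [linkFace_empty]
    exact homologyVanishes_zero k _ x
      (pureSkeleton_closed K 0 hGgmem (Finset.singleton_subset_iff.2 hxG))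
  · -- i = 1
    have hFle : F.card ≤ 1 := by omega
    by_cases hF0 : F = ∅
    · subst hF0
      rw [linkFace_empty]
      rcases (show j = 0 ∨ j = 1 by omega) with rfl | rfl
      · obtain ⟨x, hxG⟩ := Finset.card_pos.1 (show 0 < Gg.card by omega)
        exact homologyVanishes_zero k _ x
          (pureSkeleton_closed K 1 hGgmem (Finset.singleton_subset_iff.2 hxG))
      · refine homologyVanishes_one k _ (R := G.Adj) ?_ ?_
        · intro x y hxy
          refine ⟨G.ne_of_adj hxy, {x, y}, ?_, Finset.card_pair (G.ne_of_adj hxy),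
            Finset.Subset.refl _⟩
          rw [hKdef, mem_cliqueComplex, Finset.coe_insert, Finset.coe_singleton]
          exact SimpleGraph.isClique_pair.2 fun _ => hxy
        · intro x y hx hy
          have hnbr : ∀ z : W, ({z} : Finset W) ∈ pureSkeleton K 1 →
              ∃ a, G.Adj z a := by
            intro z hz
            obtain ⟨T2, hT2K, hT2c, hsub⟩ := hz
            obtain ⟨p, q, hpq, rfl⟩ := Finset.card_eq_two.1 hT2c
            have hadj : G.Adj p q := hT2K (by simp) (by simp) hpq
            rcases Finset.mem_insert.1 (hsub (Finset.mem_singleton_self z))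
              with rfl | hzq
            · exact ⟨q, hadj⟩
            · rw [Finset.mem_singleton] at hzq
              subst hzq
              exact ⟨p, hadj.symm⟩
          exact hconn x y (hnbr x hx) (hnbr y hy)
    · -- F is a singleton
      have hF1 : F.card = 1 := by
        rcases Nat.lt_or_ge F.card 1 with h | h
        · exact absurd (Finset.card_eq_zero.1 (by omega)) hF0
        · omega
      have hGg1 : Gg.card = 1 := by omega
      have hj0 : j = 0 := by omega
      subst hj0
      obtain ⟨x, rfl⟩ := Finset.card_eq_one.1 hGg1
      exact homologyVanishes_zero k _ x ⟨hdis, ⟨T', hT'K, hT'c, hunT'⟩⟩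
  · -- i = 2 : unique triangle
    obtain ⟨a, b, cc, hab, hac, hbc, hTabc⟩ := Finset.card_eq_three.1 hTc
    have hTadj : G.Adj a b ∧ G.Adj a cc ∧ G.Adj b cc := by
      subst hTabc
      exact ⟨hTK (by simp) (by simp) hab, hTK (by simp) (by simp) hac,
        hTK (by simp) (by simp) hbc⟩
    have hclose : ∀ p q : W, Relation.ReflTransGen G.Adj p q → p ∈ T → q ∈ T := by
      intro p q h
      induction h with
      | refl => exact id
      | @tail x c' _ hxc ihh =>
        intro hp
        have hx := ihh hp
        subst hTabc
        rcases Finset.mem_insert.1 hx with rfl | hx2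
        · rcases hdeg3 x b cc c' hTadj.1 hTadj.2.1 hxc with h' | h' | h'
          · exact absurd h' hbc
          · simp [← h']
          · simp [← h']
        rcases Finset.mem_insert.1 hx2 with rfl | hx3
        · rcases hdeg3 x a cc c' hTadj.1.symm hTadj.2.2 hxc with h' | h' | h'
          · exact absurd h' hac
          · simp [← h']
          · simp [← h']
        rw [Finset.mem_singleton] at hx3
        subst hx3
        rcases hdeg3 x a b c' hTadj.2.1.symm hTadj.2.2.symm hxc with h' | h' | h'
        · exact absurd h' hab
        · simp [← h']
        · simp [← h']
    have hTuniq : ∀ T2 : Finset W, T2 ∈ K → T2.card = 3 → T2 = T := by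
      intro T2 hT2K hT2c
      have hsub : T2 ⊆ T := by
        intro p hp
        obtain ⟨p', hp', hpp'⟩ : ∃ p' ∈ T2, p' ≠ p := by
          have : 1 < T2.card := by omega
          obtain ⟨x1, x2, hx1, hx2, hne⟩ := Finset.one_lt_card_iff.1 this
          by_cases hxp : x1 = p
          · exact ⟨x2, hx2, fun h => hne (hxp.trans h.symm)⟩
          · exact ⟨x1, hx1, hxp⟩
        have hadjp : G.Adj p p' := hT2K (Finset.mem_coe.2 hp)
          (Finset.mem_coe.2 hp') (Ne.symm hpp')
        have hrtg : Relation.ReflTransGen G.Adj p a :=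
          hconn p a ⟨p', hadjp⟩ ⟨b, hTadj.1⟩
        have hrtg' : Relation.ReflTransGen G.Adj a p :=
          rtg_symm (fun _ _ h => h.symm) hrtg
        exact hclose a p hrtg' (by rw [hTabc]; simp)
      exact Finset.eq_of_subset_of_card_le hsub (by omega)
    have hPS : pureSkeleton K 2 = {X : Finset W | X ⊆ T} := by
      ext X
      constructor
      · rintro ⟨T2, hT2K, hT2c, hsub⟩
        exact (hTuniq T2 hT2K hT2c) ▸ hsub
      · intro hX
        exact ⟨T, hTK, hTc, hX⟩
    obtain ⟨x, hxG⟩ := Finset.card_pos.1 (show 0 < Gg.card by omega)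
    have hxT : x ∈ T := by
      have hmem : F ∪ Gg ∈ pureSkeleton K 2 := ⟨T', hT'K, hT'c, hunT'⟩
      rw [hPS] at hmem
      exact hmem (Finset.mem_union_right F hxG)
    have hxF : x ∉ F := fun h => (Finset.disjoint_left.1 hdis h) hxG
    refine homologyVanishes_of_cone k _ x ?_ j
    rintro X ⟨hdisX, hunX⟩
    rw [hPS] at hunX
    refine ⟨Finset.disjoint_insert_right.2 ⟨hxF, hdisX⟩, ?_⟩
    rw [hPS, Finset.union_insert]
    exact Set.mem_setOf_eq ▸ Finset.insert_subset hxT hunX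

theorem conn_of_scm [Fintype W] (k : Type) [Field k]
    (h : IsSeqCMover k (cliqueComplex G)) {u w : W}
    (hu : ∃ a, G.Adj u a) (hw : ∃ b, G.Adj w b) :
    Relation.ReflTransGen G.Adj u w := by
  classical
  by_contra hno
  obtain ⟨a, hua⟩ := hu
  obtain ⟨b, hwb⟩ := hw
  set K := cliqueComplex G with hKdef
  set K1 := pureSkeleton K 1 with hK1
  have hpair : ∀ {x y : W}, G.Adj x y → ({x, y} : Finset W) ∈ K1 := by
    intro x y hxy
    refine ⟨{x, y}, ?_, Finset.card_pair (G.ne_of_adj hxy), Finset.Subset.refl _⟩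
    rw [hKdef, mem_cliqueComplex, Finset.coe_insert, Finset.coe_singleton]
    exact SimpleGraph.isClique_pair.2 fun _ => hxy
  have hsingle : ∀ {x y : W}, G.Adj x y → ({x} : Finset W) ∈ K1 :=
    fun {x y} hxy => pureSkeleton_closed _ _ (hpair hxy) (by simp)
  have hEmpty : (∅ : Finset W) ∈ K1 :=
    pureSkeleton_closed _ _ (hpair hua) (Finset.empty_subset _)
  have hCM := h 1 ∅ hEmpty 1 ⟨{u, a}, by
    rw [linkFace_empty]
    exact hpair hua, by rw [Finset.card_pair (G.ne_of_adj hua)]; omega⟩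
  rw [linkFace_empty] at hCM
  letI lo : LinearOrder W :=
    LinearOrder.lift' (Fintype.equivFin W) (Fintype.equivFin W).injective
  set c : Finset W →₀ k := Finsupp.single {u} 1 - Finsupp.single {w} 1 with hc
  have hcsupp : ∀ F ∈ c.support, F ∈ K1 ∧ F.card = 1 := by
    intro F hF
    have hsub := Finsupp.support_sub hF
    rcases Finset.mem_union.1 hsub with h' | h'
    · have := Finsupp.support_single_subset h'
      rw [Finset.mem_singleton] at this
      subst this
      exact ⟨hsingle hua, Finset.card_singleton u⟩
    · have := Finsupp.support_single_subset h'
      rw [Finset.mem_singleton] at this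
      subst this
      exact ⟨hsingle hwb, Finset.card_singleton w⟩
  have hbdc : bd k lo c = 0 := by
    rw [hc, bd_sub, bd_single, bd_single, one_smul, one_smul,
      bdFace_singleton, bdFace_singleton, sub_self]
  obtain ⟨d, hd, hbd⟩ := hCM lo c hcsupp hbdc
  refine no_boundary_of_disconn k K1 lo
    (fun x => Relation.ReflTransGen G.Adj u x) Relation.ReflTransGen.refl hno
    ?_ d hd ?_
  · intro F hFK hF2 x hx y hy
    obtain ⟨T2, hT2, hT2c, hsub⟩ := hFK
    have hFT2 : F = T2 := Finset.eq_of_subset_of_card_le hsub (by omega)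
    have hclF : G.IsClique (F : Set W) := by
      rw [hFT2]; exact hT2
    by_cases hxy : x = y
    · rw [hxy]
    · have hadj : G.Adj x y := hclF (Finset.mem_coe.2 hx) (Finset.mem_coe.2 hy) hxy
      exact ⟨fun h' => h'.tail hadj, fun h' => h'.tail hadj.symm⟩
  · rw [hbd, hc]

end AuxSCM


section AuxDeg

lemma pathGraph_deg3 {n : ℕ} {x y z t : Fin n} (hy : (pathGraph n).Adj x y)
    (hz : (pathGraph n).Adj x z) (ht : (pathGraph n).Adj x t) :
    y = z ∨ y = t ∨ z = t := by
  rw [SimpleGraph.pathGraph_adj] at hy hz ht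
  have h : (y : ℕ) = z ∨ (y : ℕ) = t ∨ (z : ℕ) = t := by omega
  rcases h with h | h | h
  · exact Or.inl (Fin.ext h)
  · exact Or.inr (Or.inl (Fin.ext h))
  · exact Or.inr (Or.inr (Fin.ext h))

lemma cycleGraph_deg3 {n : ℕ} {x y z t : Fin n} (hy : (cycleGraph n).Adj x y)
    (hz : (cycleGraph n).Adj x z) (ht : (cycleGraph n).Adj x t) :
    y = z ∨ y = t ∨ z = t := by
  match n with
  | 0 => exact x.elim0
  | 1 => exact absurd hy SimpleGraph.cycleGraph_one_adj
  | n + 2 =>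
    have key : ∀ v : Fin (n + 2), (cycleGraph (n + 2)).Adj x v →
        v = x - 1 ∨ v = x + 1 := by
      intro v hv
      rw [SimpleGraph.cycleGraph_adj] at hv
      rcases hv with h | h
      · left; rw [← h]; abel
      · right; rw [← h]; abel
    rcases key y hy with h0 | h0 <;> rcases key z hz with h | h <;>
      rcases key t ht with h' | h' <;> subst h0 <;> subst h <;> subst h' <;> simp

lemma lineGraph_deg3 {V : Type} [DecidableEq V] [Fintype V] (H : SimpleGraph V)
    [DecidableRel H.Adj]
    (hcomp : ∀ c : (SimpleGraph.lineGraph H).ConnectedComponent, ∃ n : ℕ,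
       Nonempty ((SimpleGraph.induce c.supp (SimpleGraph.lineGraph H)) ≃g pathGraph n) ∨
       Nonempty ((SimpleGraph.induce c.supp (SimpleGraph.lineGraph H)) ≃g cycleGraph n)) :
    ∀ x y z t : H.edgeSet, (SimpleGraph.lineGraph H).Adj x y →
      (SimpleGraph.lineGraph H).Adj x z → (SimpleGraph.lineGraph H).Adj x t →
      (y = z ∨ y = t ∨ z = t) := by
  intro x y z t hy hz ht
  set G := SimpleGraph.lineGraph H with hG
  set c := G.connectedComponentMk x with hc
  have hx : x ∈ c.supp := rfl
  have hmem : ∀ v : H.edgeSet, G.Adj x v → v ∈ c.supp := by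
    intro v hv
    rw [SimpleGraph.ConnectedComponent.mem_supp_iff]
    exact SimpleGraph.ConnectedComponent.sound hv.symm.reachable
  set x' : c.supp := ⟨x, hx⟩
  set y' : c.supp := ⟨y, hmem y hy⟩
  set z' : c.supp := ⟨z, hmem z hz⟩
  set t' : c.supp := ⟨t, hmem t ht⟩
  have hy' : (SimpleGraph.induce c.supp G).Adj x' y' := hy
  have hz' : (SimpleGraph.induce c.supp G).Adj x' z' := hz
  have ht' : (SimpleGraph.induce c.supp G).Adj x' t' := ht
  obtain ⟨n, hiso⟩ := hcomp c
  have hfin : y' = z' ∨ y' = t' ∨ z' = t' := by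
    rcases hiso with hiso | hiso
    all_goals obtain ⟨φ⟩ := hiso
    · have h := pathGraph_deg3 (φ.map_adj_iff.2 hy') (φ.map_adj_iff.2 hz')
        (φ.map_adj_iff.2 ht')
      rcases h with h | h | h
      · exact Or.inl (φ.toEquiv.injective h)
      · exact Or.inr (Or.inl (φ.toEquiv.injective h))
      · exact Or.inr (Or.inr (φ.toEquiv.injective h))
    · have h := cycleGraph_deg3 (φ.map_adj_iff.2 hy') (φ.map_adj_iff.2 hz')
        (φ.map_adj_iff.2 ht')
      rcases h with h | h | h
      · exact Or.inl (φ.toEquiv.injective h)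
      · exact Or.inr (Or.inl (φ.toEquiv.injective h))
      · exact Or.inr (Or.inr (φ.toEquiv.injective h))
  rcases hfin with h | h | h
  · exact Or.inl (congrArg Subtype.val h)
  · exact Or.inr (Or.inl (congrArg Subtype.val h))
  · exact Or.inr (Or.inr (congrArg Subtype.val h))

end AuxDeg

theorem stmt18 {V : Type} [DecidableEq V] [Fintype V] (H : SimpleGraph V)
    [DecidableRel H.Adj] (hedge : H.edgeSet.Nonempty) (hdeg : ∀ v : V, H.degree v ≤ 3)
    (hcomp : ∀ c : (SimpleGraph.lineGraph H).ConnectedComponent, ∃ n : ℕ,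
       Nonempty ((SimpleGraph.induce c.supp (SimpleGraph.lineGraph H)) ≃g pathGraph n) ∨
       Nonempty ((SimpleGraph.induce c.supp (SimpleGraph.lineGraph H)) ≃g cycleGraph n)) :
    VertexDecomposable (cliqueComplex (SimpleGraph.lineGraph H)) ↔
      ∃ (k : Type) (fk : Field k),
        @IsSeqCMover _ _ k fk (cliqueComplex (SimpleGraph.lineGraph H)) := by
  classical
  set G := SimpleGraph.lineGraph H with hG
  have hdeg3 := lineGraph_deg3 H hcomp
  have hKC : cliqueComplex G = KC G Finset.univ := by
    ext F
    exact ⟨fun h => ⟨h, Finset.subset_univ F⟩, fun h => h.1⟩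
  constructor
  · intro hVD
    refine ⟨ℚ, inferInstance, ?_⟩
    refine scm_of_conn G ℚ hdeg3 ?_
    intro u w hu hw
    obtain ⟨a, hua⟩ := hu
    obtain ⟨b, hwb⟩ := hw
    have hIC : IsComplex (cliqueComplex G) := by
      rw [hKC]
      exact isComplex_KC G Finset.univ
    have hmemua : ({u, a} : Finset H.edgeSet) ∈ cliqueComplex G := by
      rw [hKC]
      exact (pair_mem_KC G (G.ne_of_adj hua)).2
        ⟨Finset.mem_univ u, Finset.mem_univ a, hua⟩
    have hmemwb : ({w, b} : Finset H.edgeSet) ∈ cliqueComplex G := by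
      rw [hKC]
      exact (pair_mem_KC G (G.ne_of_adj hwb)).2
        ⟨Finset.mem_univ w, Finset.mem_univ b, hwb⟩
    have h := vd_conn hVD hIC u w
      ⟨a, (G.ne_of_adj hua).symm, hmemua⟩ ⟨b, (G.ne_of_adj hwb).symm, hmemwb⟩
    refine Relation.ReflTransGen.mono ?_ _ _ h
    intro p q hpq
    have hcl : G.IsClique (({p, q} : Finset H.edgeSet) : Set H.edgeSet) := hpq.2
    exact hcl (by simp) (by simp) hpq.1
  · rintro ⟨k, fk, hscm⟩
    letI := fk
    have hconn : ∀ u w : H.edgeSet, (∃ a, G.Adj u a) → (∃ b, G.Adj w b) →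
        Relation.ReflTransGen G.Adj u w :=
      fun u w hu hw => conn_of_scm G k hscm hu hw
    rw [hKC]
    refine vd_KC G hdeg3 Finset.univ.card Finset.univ rfl ?_
    rintro u hu w hw ⟨a, -, hua⟩ ⟨b, -, hwb⟩
    have h := hconn u w ⟨a, hua⟩ ⟨b, hwb⟩
    exact Relation.ReflTransGen.mono
      (fun p q hpq => ⟨Finset.mem_univ p, Finset.mem_univ q, hpq⟩) _ _ h
end
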